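/- arXiv:1102.2374 — 3 statements merged into one kernel-verified Lean document; each statement's English description precedes it below -/
import Mathlib

section
/- Consider the self-similar focusing ODE w'' + (1/16 + 1/(4s²) + μ/(2s))w + w³/(2s²) = 0 for real-valued w on (0,∞). Let E(s) = ½(w')² + (1/32 + 1/(8s²) + μ/(4s))w² + w⁴/(8s²). Then E'(s) = -(1/(4s³) + μ/(4s²))w² - w⁴/(4s³), and for s > s₀ := 16(|μ|+1) one has E(s) > 0 (when w not identically 0) and E'(s) ≤ (16|μ|/s²)E(s). Consequently E converges to a finite limit as s → ∞ and w, w' are bounded. -/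
open Real Set Filter Topology

private lemma aux_gron {f f' : ℝ → ℝ × ℝ} {a b K : ℝ}
    (hf : ∀ t ∈ Set.Icc a b, HasDerivAt f (f' t) t)
    (hK : ∀ t ∈ Set.Icc a b, ‖f' t‖ ≤ K * ‖f t‖)
    (h0 : f a = 0) : ∀ t ∈ Set.Icc a b, f t = 0 := by
  intro t ht
  have h := norm_le_gronwallBound_of_norm_deriv_right_le (f := f) (f' := f') (δ := 0) (K := K)
    (ε := 0) (a := a) (b := b)
    (fun x hx => (hf x hx).continuousAt.continuousWithinAt)
    (fun x hx => ((hf x (Set.Ico_subset_Icc_self hx)).hasDerivWithinAt))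
    (by simp [h0])
    (fun x hx => by simpa using hK x (Set.Ico_subset_Icc_self hx)) t ht
  rw [gronwallBound_ε0_δ0] at h
  exact norm_le_zero_iff.mp h

set_option maxHeartbeats 1000000 in
/-- Self-similar focusing ODE `w'' + (1/16 + 1/(4s²) + μ/(2s))w + w³/(2s²) = 0` with
energy `E = ½(w')² + (1/32 + 1/(8s²) + μ/(4s))w² + w⁴/(8s²)`:
`E' = -(1/(4s³)+μ/(4s²))w² - w⁴/(4s³)`, and for `s > 16(|μ|+1)` one has `E > 0`
(for nontrivial `w`) and `E' ≤ (16|μ|/s²)E`; hence `E` converges and `w`, `w'` are bounded. -/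
theorem stmt14 (μ : ℝ) (w : ℝ → ℝ)
    (hw : ContDiffOn ℝ 2 w (Set.Ioi 0))
    (hode : ∀ s > (0:ℝ),
      deriv (deriv w) s + (1/16 + 1/(4*s^2) + μ/(2*s)) * w s + (w s) ^ 3 / (2*s^2) = 0) :
    let E : ℝ → ℝ := fun s =>
      (deriv w s) ^ 2 / 2 + (1/32 + 1/(8*s^2) + μ/(4*s)) * (w s) ^ 2 + (w s) ^ 4 / (8*s^2)
    (∀ s > (0:ℝ),
      deriv E s = -(1/(4*s^3) + μ/(4*s^2)) * (w s) ^ 2 - (w s) ^ 4 / (4*s^3)) ∧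
    (∀ s > 16*(|μ|+1),
      ((∃ s' > (0:ℝ), w s' ≠ 0) → 0 < E s) ∧ deriv E s ≤ (16*|μ|/s^2) * E s) ∧
    (∃ L : ℝ, Filter.Tendsto E Filter.atTop (nhds L)) ∧
    ∃ C : ℝ, ∀ s ≥ 16*(|μ|+1), |w s| ≤ C ∧ |deriv w s| ≤ C := by
  intro E
  have hs₀pos : (0:ℝ) < 16*(|μ|+1) := by positivity
  -- basic differentiability
  have hwd : DifferentiableOn ℝ w (Set.Ioi 0) := hw.differentiableOn (by norm_num)
  have hwd2 : DifferentiableOn ℝ (deriv w) (Set.Ioi 0) :=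
    (hw.deriv_of_isOpen isOpen_Ioi (m := 1) (by norm_num)).differentiableOn (by norm_num)
  have hw1 : ∀ s > (0:ℝ), HasDerivAt w (deriv w s) s := fun s hs =>
    ((hwd.differentiableAt (isOpen_Ioi.mem_nhds hs)).hasDerivAt)
  have hw2 : ∀ s > (0:ℝ), HasDerivAt (deriv w) (deriv (deriv w) s) s := fun s hs =>
    ((hwd2.differentiableAt (isOpen_Ioi.mem_nhds hs)).hasDerivAt)
  -- derivative of the energy
  have hE : ∀ s > (0:ℝ), HasDerivAt E
      (-(1/(4*s^3) + μ/(4*s^2)) * (w s) ^ 2 - (w s) ^ 4 / (4*s^3)) s := by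
    intro s hs
    have hsne : s ≠ 0 := ne_of_gt hs
    have h1 := hw1 s hs
    have h2 := hw2 s hs
    have hp2 : HasDerivAt (fun t : ℝ => t ^ 2) (2 * s) s := by simpa using hasDerivAt_pow 2 s
    have hgb : HasDerivAt (fun t : ℝ => 8 * t ^ 2) (8 * (2 * s)) s := hp2.const_mul 8
    have hgc : HasDerivAt (fun t : ℝ => 1 / (8 * t ^ 2)) (-(8 * (2 * s)) / (8 * s ^ 2) ^ 2) s := by
      refine (hgb.inv (by positivity)).congr_of_eventuallyEq (Filter.Eventually.of_forall fun t => ?_)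
      simp [one_div]
    have hgd : HasDerivAt (fun t : ℝ => 4 * t) 4 s := by simpa using (hasDerivAt_id s).const_mul 4
    have hge : HasDerivAt (fun t : ℝ => μ / (4 * t)) (μ * (-4 / (4 * s) ^ 2)) s := by
      simpa [div_eq_mul_inv] using (hgd.inv (by positivity)).const_mul μ
    have hg : HasDerivAt (fun t : ℝ => 1/32 + 1/(8*t^2) + μ/(4*t))
        (0 + -(8 * (2 * s)) / (8 * s ^ 2) ^ 2 + μ * (-4 / (4 * s) ^ 2)) s :=
      ((hasDerivAt_const s (1/32 : ℝ)).add hgc).add hge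
    have hT1 : HasDerivAt (fun t => (deriv w t) ^ 2 / 2)
        ((2 * deriv w s ^ 1 * deriv (deriv w) s) / 2) s := (h2.pow 2).div_const 2
    have hT2 : HasDerivAt (fun t => (1/32 + 1/(8*t^2) + μ/(4*t)) * (w t) ^ 2)
        ((0 + -(8 * (2 * s)) / (8 * s ^ 2) ^ 2 + μ * (-4 / (4 * s) ^ 2)) * (w s) ^ 2
          + (1/32 + 1/(8*s^2) + μ/(4*s)) * (2 * w s ^ 1 * deriv w s)) s := hg.mul (h1.pow 2)
    have hT3 : HasDerivAt (fun t => (w t) ^ 4 / (8 * t ^ 2))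
        (((4 * w s ^ 3 * deriv w s) * (8 * s ^ 2) - (w s) ^ 4 * (8 * (2 * s))) / (8 * s ^ 2) ^ 2)
        s := (h1.pow 4).div hgb (by positivity)
    have hsum := (hT1.add hT2).add hT3
    refine hsum.congr_deriv ?_
    have hw'' : deriv (deriv w) s
        = -((1/16 + 1/(4*s^2) + μ/(2*s)) * w s + (w s) ^ 3 / (2*s^2)) := by
      have := hode s hs; linarith
    rw [hw'']
    field_simp
    ring
  have part1 : ∀ s > (0:ℝ),
      deriv E s = -(1/(4*s^3) + μ/(4*s^2)) * (w s) ^ 2 - (w s) ^ 4 / (4*s^3) :=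
    fun s hs => (hE s hs).deriv
  -- coefficient lower bound
  have hcoef : ∀ s ≥ 16*(|μ|+1), (1:ℝ)/64 ≤ 1/32 + 1/(8*s^2) + μ/(4*s) := by
    intro s hs
    have hspos : 0 < s := lt_of_lt_of_le hs₀pos hs
    have h2 : -(μ/(4*s)) ≤ 1/64 := by
      rw [← neg_div, div_le_iff₀ (by positivity : (0:ℝ) < 4*s)]
      have h3 := neg_abs_le μ
      have h4 := abs_nonneg μ
      nlinarith
    have h3 : (0:ℝ) ≤ 1/(8*s^2) := by positivity
    linarith
  -- energy lower bound by squares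
  have hElb : ∀ s ≥ 16*(|μ|+1), (deriv w s)^2/2 + (w s)^2/64 ≤ E s := by
    intro s hs
    have hspos : 0 < s := lt_of_lt_of_le hs₀pos hs
    have h1 := hcoef s hs
    have h2 : (0:ℝ) ≤ (w s)^4/(8*s^2) := by positivity
    have h3 : (w s)^2/64 ≤ (1/32 + 1/(8*s^2) + μ/(4*s)) * (w s)^2 := by
      nlinarith [sq_nonneg (w s)]
    show (deriv w s)^2/2 + (w s)^2/64
        ≤ (deriv w s) ^ 2 / 2 + (1/32 + 1/(8*s^2) + μ/(4*s)) * (w s) ^ 2 + (w s) ^ 4 / (8*s^2)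
    linarith
  clear_value E
  have hEnn : ∀ s ≥ 16*(|μ|+1), 0 ≤ E s := by
    intro s hs
    exact le_trans (by positivity) (hElb s hs)
  -- uniqueness: vanishing at one point kills w everywhere
  have hzero : ∀ a, 0 < a → w a = 0 → deriv w a = 0 → ∀ b, 0 < b → w b = 0 := by
    intro a ha hwa hwa' b hb
    set l := min a b with hl
    set u := max a b with hu
    have hl0 : 0 < l := lt_min ha hb
    have hlu : l ≤ u := min_le_max
    have hsub : Set.Icc l u ⊆ Set.Ioi 0 := fun t ht => lt_of_lt_of_le hl0 ht.1
    obtain ⟨M, hM⟩ := isCompact_Icc.exists_bound_of_continuousOn (hw.continuousOn.mono hsub)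
    have hM' : ∀ x ∈ Set.Icc l u, |w x| ≤ M := by simpa [Real.norm_eq_abs] using hM
    have hM0 : 0 ≤ M := le_trans (abs_nonneg _) (hM' l ⟨le_rfl, hlu⟩)
    set K : ℝ := 1 + (1/16 + 1/(4*l^2) + |μ|/(2*l) + M^2/(2*l^2)) with hKdef
    have hK1 : 1 ≤ K := le_add_of_nonneg_right (by positivity)
    have hbnd : ∀ t ∈ Set.Icc l u,
        max |deriv w t| |deriv (deriv w) t| ≤ K * max |w t| |deriv w t| := by
      intro t ht
      have ht0 : 0 < t := hsub ht
      have hmax0 : 0 ≤ max |w t| |deriv w t| := le_trans (abs_nonneg _) (le_max_left _ _)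
      apply max_le
      · calc |deriv w t| ≤ max |w t| |deriv w t| := le_max_right _ _
          _ = 1 * max |w t| |deriv w t| := (one_mul _).symm
          _ ≤ K * max |w t| |deriv w t| := by gcongr
      · have hw'' : deriv (deriv w) t
            = -((1/16 + 1/(4*t^2) + μ/(2*t)) * w t + (w t) ^ 3 / (2*t^2)) := by
          have := hode t ht0; linarith
        have hMt : |w t| ≤ M := hM' t ht
        have hlt : l ≤ t := ht.1
        have e1 : |deriv (deriv w) t|
            ≤ (1/16 + 1/(4*t^2) + |μ|/(2*t) + M^2/(2*t^2)) * |w t| := by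
          rw [hw'', abs_neg]
          calc |(1/16 + 1/(4*t^2) + μ/(2*t)) * w t + (w t) ^ 3 / (2*t^2)|
              ≤ |(1/16 + 1/(4*t^2) + μ/(2*t)) * w t| + |(w t) ^ 3 / (2*t^2)| := abs_add_le _ _
            _ = |1/16 + 1/(4*t^2) + μ/(2*t)| * |w t| + |w t| ^ 3 / (2*t^2) := by
                rw [abs_mul, abs_div, abs_pow, abs_of_pos (by positivity : (0:ℝ) < 2*t^2)]
            _ ≤ (1/16 + 1/(4*t^2) + |μ|/(2*t)) * |w t| + (M^2 * |w t|) / (2*t^2) := by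
                gcongr
                · calc |1/16 + 1/(4*t^2) + μ/(2*t)|
                      ≤ |1/16 + 1/(4*t^2)| + |μ/(2*t)| := abs_add_le _ _
                    _ = 1/16 + 1/(4*t^2) + |μ|/(2*t) := by
                        rw [abs_of_pos (by positivity : (0:ℝ) < 1/16 + 1/(4*t^2)), abs_div,
                          abs_of_pos (by positivity : (0:ℝ) < 2*t)]
                · nlinarith [mul_le_mul_of_nonneg_right
                      (mul_self_le_mul_self (abs_nonneg (w t)) hMt) (abs_nonneg (w t))]
            _ = (1/16 + 1/(4*t^2) + |μ|/(2*t) + M^2/(2*t^2)) * |w t| := by ring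
        have hXK : 1/16 + 1/(4*t^2) + |μ|/(2*t) + M^2/(2*t^2) ≤ K := by
          rw [hKdef]
          have g1 : 1/(4*t^2) ≤ 1/(4*l^2) := by gcongr
          have g2 : |μ|/(2*t) ≤ |μ|/(2*l) := by gcongr
          have g3 : M^2/(2*t^2) ≤ M^2/(2*l^2) := by gcongr
          linarith
        have e2 : (1/16 + 1/(4*t^2) + |μ|/(2*t) + M^2/(2*t^2)) * |w t| ≤ K * |w t| :=
          mul_le_mul_of_nonneg_right hXK (abs_nonneg _)
        calc |deriv (deriv w) t| ≤ K * |w t| := le_trans e1 e2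
          _ ≤ K * max |w t| |deriv w t| := by
              have hK0 : (0:ℝ) ≤ K := le_trans zero_le_one hK1
              gcongr
              exact le_max_left _ _
    rcases le_total a b with hab | hab
    · have hicc : Set.Icc a b ⊆ Set.Icc l u :=
        Set.Icc_subset_Icc (min_le_left _ _) (le_max_right _ _)
      have hres := aux_gron (f := fun t => (w t, deriv w t))
        (f' := fun t => (deriv w t, deriv (deriv w) t)) (a := a) (b := b) (K := K)
        (fun t ht => ((hw1 t (hsub (hicc ht))).prodMk (hw2 t (hsub (hicc ht)))))
        (fun t ht => by
          simpa [Prod.norm_def, Real.norm_eq_abs] using hbnd t (hicc ht))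
        (by simp [hwa, hwa', Prod.ext_iff]) b ⟨hab, le_rfl⟩
      simpa [Prod.ext_iff] using congrArg Prod.fst hres
    · have hicc : Set.Icc b a ⊆ Set.Icc l u :=
        Set.Icc_subset_Icc (min_le_right _ _) (le_max_left _ _)
      have hmem : ∀ t ∈ Set.Icc b a, a + b - t ∈ Set.Icc b a := by
        intro t ht; exact ⟨by linarith [ht.2], by linarith [ht.1]⟩
      have hres := aux_gron (f := fun t => (w (a + b - t), deriv w (a + b - t)))
        (f' := fun t => (-(deriv w (a + b - t)), -(deriv (deriv w) (a + b - t))))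
        (a := b) (b := a) (K := K)
        (fun t ht => by
          have hs0 : 0 < a + b - t := hsub (hicc (hmem t ht))
          have hinner : HasDerivAt (fun t : ℝ => a + b - t) (-1) t := by
            simpa using (hasDerivAt_id t).const_sub (a + b)
          have c1 := (hw1 _ hs0).comp t hinner
          have c2 := (hw2 _ hs0).comp t hinner
          simp only [Function.comp_def, mul_neg_one] at c1 c2
          exact c1.prodMk c2)
        (fun t ht => by
          have := hbnd (a + b - t) (hicc (hmem t ht))
          simpa [Prod.norm_def, Real.norm_eq_abs] using this)
        (by simp [hwa, hwa', Prod.ext_iff]) a ⟨hab, le_rfl⟩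
      have : w (a + b - a) = 0 := by simpa [Prod.ext_iff] using congrArg Prod.fst hres
      simpa using this
  -- part 2a: positivity
  have hpos : ∀ s > 16*(|μ|+1), (∃ s' > (0:ℝ), w s' ≠ 0) → 0 < E s := by
    rintro s hs ⟨s', hs', hws'⟩
    have hspos : 0 < s := lt_trans hs₀pos hs
    have hne : w s ≠ 0 ∨ deriv w s ≠ 0 := by
      by_contra h
      push_neg at h
      exact hws' (hzero s hspos h.1 h.2 s' hs')
    have hlb := hElb s (le_of_lt hs)
    rcases hne with h | h
    · have h2 : 0 < (w s)^2 := by positivity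
      nlinarith [sq_nonneg (deriv w s)]
    · have h2 : 0 < (deriv w s)^2 := by positivity
      nlinarith [sq_nonneg (w s)]
  -- part 2b: differential inequality
  have hineq : ∀ s > 16*(|μ|+1),
      -(1/(4*s^3) + μ/(4*s^2)) * (w s) ^ 2 - (w s) ^ 4 / (4*s^3) ≤ (16*|μ|/s^2) * E s := by
    intro s hs
    have hspos : 0 < s := lt_trans hs₀pos hs
    have h1 : -(1/(4*s^3) + μ/(4*s^2)) * (w s) ^ 2 - (w s) ^ 4 / (4*s^3)
        ≤ |μ|/(4*s^2) * (w s)^2 := by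
      have hh1 : (0:ℝ) ≤ (w s)^2/(4*s^3) := by positivity
      have hh2 : (0:ℝ) ≤ (w s)^4/(4*s^3) := by positivity
      have hh3 := mul_le_mul_of_nonneg_right (neg_le_abs μ)
        (by positivity : (0:ℝ) ≤ (w s)^2/(4*s^2))
      calc -(1/(4*s^3) + μ/(4*s^2)) * (w s) ^ 2 - (w s) ^ 4 / (4*s^3)
          = -μ * ((w s)^2/(4*s^2)) - (w s)^2/(4*s^3) - (w s)^4/(4*s^3) := by ring
        _ ≤ |μ| * ((w s)^2/(4*s^2)) := by linarith
        _ = |μ|/(4*s^2) * (w s)^2 := by ring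
    have hElb2 : (w s)^2/64 ≤ E s := by
      have := hElb s (le_of_lt hs)
      nlinarith [sq_nonneg (deriv w s)]
    have h2 : |μ|/(4*s^2) * (w s)^2 ≤ (16*|μ|/s^2) * E s := by
      calc |μ|/(4*s^2) * (w s)^2 = (16*|μ|/s^2) * ((w s)^2/64) := by ring
        _ ≤ (16*|μ|/s^2) * E s := by
            have : (0:ℝ) ≤ 16*|μ|/s^2 := by positivity
            exact mul_le_mul_of_nonneg_left hElb2 this
    linarith
  have part2 : ∀ s > 16*(|μ|+1),
      ((∃ s' > (0:ℝ), w s' ≠ 0) → 0 < E s) ∧ deriv E s ≤ (16*|μ|/s^2) * E s := by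
    intro s hs
    have hspos : 0 < s := lt_trans hs₀pos hs
    exact ⟨hpos s hs, by rw [part1 s hspos]; exact hineq s hs⟩
  -- the exponentially weighted energy
  set F : ℝ → ℝ := fun s => Real.exp (16*|μ|/s) * E s with hFdef
  have hFderiv : ∀ s > (0:ℝ), HasDerivAt F
      (Real.exp (16*|μ|/s) * ((-(16*|μ|)/s^2) * E s
        + (-(1/(4*s^3) + μ/(4*s^2)) * (w s) ^ 2 - (w s) ^ 4 / (4*s^3)))) s := by
    intro s hs
    have hinv : HasDerivAt (fun t : ℝ => 16*|μ|/t) (16*|μ| * (-(s^2)⁻¹)) s := by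
      simpa [div_eq_mul_inv] using (hasDerivAt_inv (ne_of_gt hs)).const_mul (16*|μ|)
    have hexp : HasDerivAt (fun t : ℝ => Real.exp (16*|μ|/t))
        (Real.exp (16*|μ|/s) * (16*|μ| * (-(s^2)⁻¹))) s := hinv.exp
    have h := hexp.mul (hE s hs)
    refine h.congr_deriv ?_
    ring
  have hFanti : AntitoneOn F (Set.Ici (16*(|μ|+1))) := by
    apply antitoneOn_of_deriv_nonpos (convex_Ici _)
    · intro t ht
      have ht0 : 0 < t := lt_of_lt_of_le hs₀pos ht
      exact (hFderiv t ht0).continuousAt.continuousWithinAt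
    · intro t ht
      rw [interior_Ici] at ht
      have ht0 : 0 < t := lt_trans hs₀pos ht
      exact (hFderiv t ht0).differentiableAt.differentiableWithinAt
    · intro t ht
      rw [interior_Ici] at ht
      have ht0 : 0 < t := lt_trans hs₀pos ht
      rw [(hFderiv t ht0).deriv]
      have key : (-(16*|μ|)/t^2) * E t
          + (-(1/(4*t^3) + μ/(4*t^2)) * (w t) ^ 2 - (w t) ^ 4 / (4*t^3)) ≤ 0 := by
        have h1 := hineq t ht
        have h2 : (-(16*|μ|)/t^2) * E t = -((16*|μ|/t^2) * E t) := by ring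
        linarith
      have hexp0 : (0:ℝ) ≤ Real.exp (16*|μ|/t) := le_of_lt (Real.exp_pos _)
      exact mul_nonpos_of_nonneg_of_nonpos hexp0 key
  have hFnn : ∀ s ≥ 16*(|μ|+1), 0 ≤ F s := by
    intro s hs
    have := hEnn s hs
    have := Real.exp_pos (16*|μ|/s)
    positivity
  -- convergence of E
  have hconv : ∃ L : ℝ, Filter.Tendsto E Filter.atTop (nhds L) := by
    set G : ℝ → ℝ := fun t => F (max t (16*(|μ|+1))) with hGdef
    have hGanti : Antitone G := by
      intro x y hxy
      exact hFanti (Set.mem_Ici.2 (le_max_right _ _)) (Set.mem_Ici.2 (le_max_right _ _)) (max_le_max hxy le_rfl)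
    have hGbdd : BddBelow (Set.range G) := by
      refine ⟨0, ?_⟩
      rintro _ ⟨t, rfl⟩
      exact hFnn _ (le_max_right _ _)
    have hGlim := tendsto_atTop_ciInf hGanti hGbdd
    have hFG : F =ᶠ[atTop] G := by
      filter_upwards [eventually_ge_atTop (16*(|μ|+1))] with t ht
      simp only [hGdef, max_eq_left ht]
    have hFlim : Filter.Tendsto F Filter.atTop (nhds (⨅ i, G i)) := hGlim.congr' hFG.symm
    have hexplim : Filter.Tendsto (fun s : ℝ => Real.exp (-(16*|μ|/s))) Filter.atTop (nhds 1) := by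
      have h0 : Filter.Tendsto (fun s : ℝ => 16*|μ|/s) Filter.atTop (nhds 0) :=
        tendsto_const_nhds.div_atTop tendsto_id
      have h0n : Filter.Tendsto (fun s : ℝ => -(16*|μ|/s)) Filter.atTop (nhds 0) := by
        simpa using h0.neg
      have := (Real.continuous_exp.tendsto 0).comp h0n
      simpa [Function.comp_def, Real.exp_zero] using this
    refine ⟨⨅ i, G i, ?_⟩
    have hmul := hexplim.mul hFlim
    rw [one_mul] at hmul
    apply hmul.congr
    intro s
    simp only [hFdef]
    rw [← mul_assoc, ← Real.exp_add, neg_add_cancel, Real.exp_zero, one_mul]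
  -- boundedness of w and w'
  have hbound : ∃ C : ℝ, ∀ s ≥ 16*(|μ|+1), |w s| ≤ C ∧ |deriv w s| ≤ C := by
    have hF0 : 0 ≤ F (16*(|μ|+1)) := hFnn _ le_rfl
    refine ⟨Real.sqrt (66 * F (16*(|μ|+1)) + 1), ?_⟩
    intro s hs
    have hspos : 0 < s := lt_of_lt_of_le hs₀pos hs
    set C := Real.sqrt (66 * F (16*(|μ|+1)) + 1) with hCdef
    have hC0 : 0 ≤ C := Real.sqrt_nonneg _
    have hC2 : C^2 = 66 * F (16*(|μ|+1)) + 1 := Real.sq_sqrt (by positivity)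
    have hEF : E s ≤ F (16*(|μ|+1)) := by
      have h1 : E s ≤ F s := by
        have hx : (1:ℝ) ≤ Real.exp (16*|μ|/s) := Real.one_le_exp (by positivity)
        have hEs := hEnn s hs
        calc E s = 1 * E s := (one_mul _).symm
          _ ≤ Real.exp (16*|μ|/s) * E s := mul_le_mul_of_nonneg_right hx hEs
      exact le_trans h1 (hFanti self_mem_Ici hs hs)
    have hlb := hElb s hs
    constructor
    · rw [← Real.sqrt_sq_eq_abs, ← Real.sqrt_sq hC0]
      apply Real.sqrt_le_sqrt
      nlinarith [sq_nonneg (deriv w s)]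
    · rw [← Real.sqrt_sq_eq_abs, ← Real.sqrt_sq hC0]
      apply Real.sqrt_le_sqrt
      nlinarith [sq_nonneg (w s)]
  exact ⟨part1, part2, hconv, hbound⟩
end

section
/- Consider the self-similar defocusing ODE w'' + (1/16 + 1/(4s²) - μ/(2s))w - w³/(2s²) = 0 on [s₀,∞) with s₀ = 16(|μ|+1), and E(s) = ½(w')² + (1/32 + 1/(8s²) - μ/(4s))w² - w⁴/(8s²). If |w(s₀)| ≤ 1 and |w(s₀)|, |w'(s₀)| are sufficiently small, then |w(s)| ≤ 1 for all s ≥ s₀ and w, w' remain bounded: as long as |w| ≤ 1, E(s) ≥ ½(w')² + w²/64 and E'(s) ≤ (16(|μ|+1)/s²)E(s), and a bootstrap closes the bound. -/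
open Real Set Filter


lemma stmt15_aux1 (μ x d s : ℝ) (hs : 16*(|μ|+1) ≤ s) (hx : |x| ≤ 1) :
    d^2/2 + x^2/64 ≤ d^2/2 + (1/32 + 1/(8*s^2) - μ/(4*s)) * x^2 - x^4/(8*s^2) := by
  have h1 : (0:ℝ) ≤ |μ| := abs_nonneg μ
  have hs16 : (16:ℝ) ≤ s := by nlinarith
  have hs0 : (0:ℝ) < s := by linarith
  have hmu : μ ≤ |μ| := le_abs_self μ
  have hx2 : x^2 ≤ 1 := by nlinarith [abs_nonneg x, sq_abs x]
  have key : μ/(4*s) * x^2 ≤ (1/64) * x^2 := by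
    apply mul_le_mul_of_nonneg_right _ (sq_nonneg x)
    rw [div_le_iff₀ (by linarith)]
    nlinarith
  have key2 : x^4/(8*s^2) ≤ x^2/(8*s^2) := by
    apply div_le_div_of_nonneg_right ?_ (by positivity)
    · nlinarith [sq_nonneg x]
  have expand : (1/32 + 1/(8*s^2) - μ/(4*s)) * x^2
      = (1/32) * x^2 + x^2/(8*s^2) - μ/(4*s) * x^2 := by ring
  rw [expand]
  linarith


lemma stmt15_hasDeriv (μ : ℝ) (w : ℝ → ℝ) (s : ℝ) (hs0 : 0 < s)
    (hw1 : HasDerivAt w (deriv w s) s)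
    (hw2 : HasDerivAt (deriv w) (deriv (deriv w) s) s)
    (hode : deriv (deriv w) s + (1/16 + 1/(4*s^2) - μ/(2*s)) * w s - (w s)^3/(2*s^2) = 0) :
    HasDerivAt (fun t => (deriv w t) ^ 2 / 2 + (1/32 + 1/(8*t^2) - μ/(4*t)) * (w t) ^ 2
        - (w t) ^ 4 / (8*t^2))
      ((μ/(4*s^2) - 1/(4*s^3)) * (w s)^2 + (w s)^4/(4*s^3)) s := by
  have hs : s ≠ 0 := ne_of_gt hs0
  have a1 : HasDerivAt (fun t:ℝ => 8*t^2) (16*s) s := by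
    have := (hasDerivAt_pow 2 s).const_mul (8:ℝ)
    convert this using 1
    all_goals try rfl
    push_cast
    ring
  have a2 : HasDerivAt (fun t:ℝ => 4*t) (4:ℝ) s := by
    simpa using (hasDerivAt_id s).const_mul 4
  have b1 : HasDerivAt (fun t:ℝ => 1/(8*t^2)) ((0 * (8*s^2) - 1*(16*s))/(8*s^2)^2) s :=
    (hasDerivAt_const s (1:ℝ)).div a1 (by positivity)
  have b2 : HasDerivAt (fun t:ℝ => μ/(4*t)) ((0 * (4*s) - μ*4)/(4*s)^2) s :=
    (hasDerivAt_const s μ).div a2 (by positivity)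
  have h2 : HasDerivAt (fun t:ℝ => 1/32 + 1/(8*t^2) - μ/(4*t))
      (0 + (0 * (8*s^2) - 1*(16*s))/(8*s^2)^2 - (0 * (4*s) - μ*4)/(4*s)^2) s :=
    ((hasDerivAt_const s (1/32:ℝ)).add b1).sub b2
  have h1 : HasDerivAt (fun t:ℝ => (deriv w t)^2 / 2)
      ((2:ℕ) * (deriv w s)^1 * deriv (deriv w) s / 2) s := (hw2.pow 2).div_const 2
  have h3 : HasDerivAt (fun t:ℝ => (1/32 + 1/(8*t^2) - μ/(4*t)) * (w t)^2)
      ((0 + (0 * (8*s^2) - 1*(16*s))/(8*s^2)^2 - (0 * (4*s) - μ*4)/(4*s)^2) * (w s)^2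
        + (1/32 + 1/(8*s^2) - μ/(4*s)) * ((2:ℕ) * (w s)^1 * deriv w s)) s :=
    h2.mul (hw1.pow 2)
  have h4 : HasDerivAt (fun t:ℝ => (w t)^4 / (8*t^2))
      (((4:ℕ) * (w s)^3 * deriv w s * (8*s^2) - (w s)^4 * (16*s)) / (8*s^2)^2) s :=
    (hw1.pow 4).div a1 (by positivity)
  have := (h1.add h3).sub h4
  convert this using 1
  all_goals try rfl
  have hode' : deriv (deriv w) s
      = (w s)^3/(2*s^2) - (1/16 + 1/(4*s^2) - μ/(2*s)) * w s := by linarith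
  rw [hode']
  field_simp
  ring

lemma stmt15_gron (μ : ℝ) (w Et : ℝ → ℝ)
    (hEt : Et = fun s => (derivWithin w (Ici (16*(|μ|+1))) s)^2/2
      + (1/32 + 1/(8*s^2) - μ/(4*s)) * (w s)^2 - (w s)^4/(8*s^2))
    (hw : ContDiffOn ℝ 2 w (Ici (16*(|μ|+1))))
    (hode : ∀ s > 16*(|μ|+1),
      deriv (deriv w) s + (1/16 + 1/(4*s^2) - μ/(2*s)) * w s - (w s)^3/(2*s^2) = 0)
    (s₁ : ℝ) (hs₁ : 16*(|μ|+1) ≤ s₁)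
    (hbd : ∀ s' ∈ Icc (16*(|μ|+1)) s₁, |w s'| ≤ 1) :
    Et s₁ ≤ Real.exp 1 * Et (16*(|μ|+1)) := by
  set a : ℝ := 16*(|μ|+1) with ha
  have ha16 : (16:ℝ) ≤ a := by have := abs_nonneg μ; nlinarith
  have ha0 : (0:ℝ) < a := by linarith
  set F : ℝ → ℝ := fun s => Et s * Real.exp (a/s) with hF
  -- continuity of Et on Icc a s₁
  have hposx : ∀ x ∈ Icc a s₁, (0:ℝ) < x := fun x hx => lt_of_lt_of_le ha0 hx.1
  have hcw : ContinuousOn w (Ici a) := hw.continuousOn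
  have hc1 : ContinuousOn (derivWithin w (Ici a)) (Ici a) :=
    hw.continuousOn_derivWithin (uniqueDiffOn_Ici a) (by norm_num)
  have hEtc : ContinuousOn Et (Icc a s₁) := by
    rw [hEt]
    apply ContinuousOn.sub
    · apply ContinuousOn.add
      · exact ((hc1.mono Icc_subset_Ici_self).pow 2).div_const 2
      · apply ContinuousOn.mul
        · apply ContinuousOn.sub
          · apply ContinuousOn.add continuousOn_const
            exact continuousOn_const.div (by fun_prop)
              (fun x hx => by have := hposx x hx; positivity)
          · exact continuousOn_const.div (by fun_prop)
              (fun x hx => by have := hposx x hx; positivity)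
        · exact ((hcw.mono Icc_subset_Ici_self).pow 2)
    · exact ((hcw.mono Icc_subset_Ici_self).pow 4).div (by fun_prop)
        (fun x hx => by have := hposx x hx; positivity)
  have hFc : ContinuousOn F (Icc a s₁) := by
    apply hEtc.mul
    exact Real.continuous_exp.comp_continuousOn
      (continuousOn_const.div continuousOn_id
        (fun x hx => ne_of_gt (hposx x hx)))
  -- derivative info at interior points
  have hFd : ∀ x ∈ Ioo a s₁, HasDerivAt F
      (((μ/(4*x^2) - 1/(4*x^3)) * (w x)^2 + (w x)^4/(4*x^3)) * Real.exp (a/x)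
        + Et x * (Real.exp (a/x) * ((0*x - a*1)/x^2))) x := by
    intro x hx
    have hx1 : a < x := hx.1
    have hx0 : (0:ℝ) < x := lt_trans ha0 hx1
    have hmem : Ici a ∈ nhds x := Ici_mem_nhds hx1
    have hcd : ContDiffAt ℝ 2 w x := hw.contDiffAt hmem
    have hw1 : HasDerivAt w (deriv w x) x :=
      (hcd.differentiableAt (by norm_num)).hasDerivAt
    have hw2 : HasDerivAt (deriv w) (deriv (deriv w) x) x := by
      have hopen : ContDiffOn ℝ 2 w (Ioi a) := hw.mono Ioi_subset_Ici_self
      have hD : ContDiffOn ℝ 1 (deriv w) (Ioi a) :=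
        hopen.deriv_of_isOpen isOpen_Ioi (by norm_num)
      exact (((hD.differentiableOn one_ne_zero).differentiableAt
        (Ioi_mem_nhds hx1))).hasDerivAt
    have hE := stmt15_hasDeriv μ w x hx0 hw1 hw2 (hode x hx1)
    have heq : Et =ᶠ[nhds x] (fun t => (deriv w t) ^ 2 / 2
        + (1/32 + 1/(8*t^2) - μ/(4*t)) * (w t) ^ 2 - (w t) ^ 4 / (8*t^2)) := by
      filter_upwards [Ioi_mem_nhds hx1] with y hy
      rw [hEt]
      simp only
      rw [derivWithin_of_mem_nhds (Ici_mem_nhds hy)]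
    have hEtd : HasDerivAt Et
        ((μ/(4*x^2) - 1/(4*x^3)) * (w x)^2 + (w x)^4/(4*x^3)) x :=
      hE.congr_of_eventuallyEq heq
    have hq : HasDerivAt (fun t:ℝ => a/t) ((0*x - a*1)/x^2) x :=
      (hasDerivAt_const x a).div (hasDerivAt_id x) (ne_of_gt hx0)
    exact hEtd.mul hq.exp
  have hanti : AntitoneOn F (Icc a s₁) := by
    apply antitoneOn_of_deriv_nonpos (convex_Icc a s₁) hFc
    · rw [interior_Icc]
      exact fun x hx => ((hFd x hx).differentiableAt).differentiableWithinAt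
    · rw [interior_Icc]
      intro x hx
      rw [(hFd x hx).deriv]
      have hx1 : a < x := hx.1
      have hx0 : (0:ℝ) < x := lt_trans ha0 hx1
      have hwx : |w x| ≤ 1 := hbd x ⟨hx.1.le, hx.2.le⟩
      have hwx2 : (w x)^2 ≤ 1 := by nlinarith [abs_nonneg (w x), sq_abs (w x)]
      have hwx4 : (w x)^4 ≤ (w x)^2 := by nlinarith [sq_nonneg (w x)]
      -- lower bound for Et x
      have hlow : (w x)^2/64 ≤ Et x := by
        have := stmt15_aux1 μ (w x) (derivWithin w (Ici a) x) x hx1.le hwx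
        rw [hEt]
        simp only
        nlinarith [sq_nonneg (derivWithin w (Ici a) x)]
      -- D ≤ (a/x²)·Et x
      have hmu : μ ≤ |μ| := le_abs_self μ
      have hD1 : (μ/(4*x^2) - 1/(4*x^3)) * (w x)^2 + (w x)^4/(4*x^3)
          ≤ |μ|/(4*x^2) * (w x)^2 := by
        have h1 : (w x)^4/(4*x^3) ≤ (w x)^2/(4*x^3) :=
          div_le_div_of_nonneg_right hwx4 (by positivity)
        have h2 : μ/(4*x^2) * (w x)^2 ≤ |μ|/(4*x^2) * (w x)^2 :=
          mul_le_mul_of_nonneg_right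
            (div_le_div_of_nonneg_right hmu (by positivity)) (sq_nonneg (w x))
        have e1 : (μ/(4*x^2) - 1/(4*x^3)) * (w x)^2 + (w x)^4/(4*x^3)
            = μ/(4*x^2)*(w x)^2 - (w x)^2/(4*x^3) + (w x)^4/(4*x^3) := by ring
        rw [e1]
        linarith
      have hD2 : |μ|/(4*x^2) * (w x)^2 ≤ a/x^2 * ((w x)^2/64) := by
        have : a/x^2 * ((w x)^2/64) - |μ|/(4*x^2) * (w x)^2 = (w x)^2/(4*x^2) := by
          rw [ha]; field_simp; ring
        nlinarith [sq_nonneg (w x), sq_nonneg x, div_nonneg (sq_nonneg (w x))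
          (show (0:ℝ) ≤ 4*x^2 by positivity)]
      have hD3 : a/x^2 * ((w x)^2/64) ≤ a/x^2 * Et x :=
        mul_le_mul_of_nonneg_left hlow (by positivity)
      have hD : (μ/(4*x^2) - 1/(4*x^3)) * (w x)^2 + (w x)^4/(4*x^3) ≤ a/x^2 * Et x :=
        le_trans (le_trans hD1 hD2) hD3
      have hsimp : (0*x - a*1)/x^2 = -(a/x^2) := by field_simp; ring
      rw [hsimp]
      have hep : (0:ℝ) < Real.exp (a/x) := Real.exp_pos _
      nlinarith [mul_le_mul_of_nonneg_right hD (le_of_lt hep)]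
  have hmema : a ∈ Icc a s₁ := ⟨le_rfl, hs₁⟩
  have hmems : s₁ ∈ Icc a s₁ := ⟨hs₁, le_rfl⟩
  have hFle : F s₁ ≤ F a := hanti hmema hmems hs₁
  have hEt1nn : 0 ≤ Et s₁ := by
    have hw1 : |w s₁| ≤ 1 := hbd s₁ hmems
    have := stmt15_aux1 μ (w s₁) (derivWithin w (Ici a) s₁) s₁ hs₁ hw1
    rw [hEt]; simp only
    nlinarith [sq_nonneg (derivWithin w (Ici a) s₁), sq_nonneg (w s₁)]
  have h1 : Et s₁ ≤ F s₁ := by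
    rw [hF]; simp only
    nlinarith [Real.one_le_exp (div_nonneg ha0.le (le_trans ha0.le hs₁)), hEt1nn]
  have h2 : F a = Real.exp 1 * Et a := by
    rw [hF]; simp only
    rw [div_self (ne_of_gt ha0)]
    ring
  calc Et s₁ ≤ F s₁ := h1
    _ ≤ F a := hFle
    _ = Real.exp 1 * Et a := h2

set_option maxHeartbeats 1000000 in
lemma stmt15_step (μ : ℝ) (w : ℝ → ℝ)
    (hw : ContDiffOn ℝ 2 w (Ici (16*(|μ|+1))))
    (hode : ∀ s > 16*(|μ|+1),
      deriv (deriv w) s + (1/16 + 1/(4*s^2) - μ/(2*s)) * w s - (w s)^3/(2*s^2) = 0)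
    (h0 : |w (16*(|μ|+1))| ≤ 1/32)
    (h0' : |derivWithin w (Ici (16*(|μ|+1))) (16*(|μ|+1))| ≤ 1/32)
    (s₁ : ℝ) (hs₁ : 16*(|μ|+1) ≤ s₁)
    (hbd : ∀ s' ∈ Icc (16*(|μ|+1)) s₁, |w s'| ≤ 1) :
    |w s₁| ≤ 1/2 ∧ |derivWithin w (Ici (16*(|μ|+1))) s₁| ≤ 1 := by
  set a : ℝ := 16*(|μ|+1) with ha
  have ha16 : (16:ℝ) ≤ a := by have := abs_nonneg μ; nlinarith
  have ha0 : (0:ℝ) < a := by linarith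
  set Et : ℝ → ℝ := fun s => (derivWithin w (Ici a) s)^2/2
      + (1/32 + 1/(8*s^2) - μ/(4*s)) * (w s)^2 - (w s)^4/(8*s^2) with hEtdef
  have hg := stmt15_gron μ w Et hEtdef hw hode s₁ hs₁ hbd
  rw [← ha] at hg
  clear_value Et
  set d0 : ℝ := derivWithin w (Ici a) a with hd0
  set x0 : ℝ := w a with hx0
  clear_value d0 x0
  have hd0sq : d0^2 ≤ 1/1024 := by nlinarith [sq_abs d0, abs_nonneg d0]
  have hx0sq : x0^2 ≤ 1/1024 := by nlinarith [sq_abs x0, abs_nonneg x0]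
  have hcoef : 1/32 + 1/(8*a^2) - μ/(4*a) ≤ 1/16 := by
    have h1 : 1/(8*a^2) ≤ (1/2048:ℝ) := by
      rw [div_le_div_iff₀ (by positivity) (by norm_num)]
      nlinarith
    have h2 : -μ/(4*a) ≤ (1/64:ℝ) := by
      rw [div_le_div_iff₀ (by positivity) (by norm_num)]
      have := neg_abs_le μ
      nlinarith
    have : -(μ/(4*a)) = -μ/(4*a) := by ring
    linarith [this ▸ h2]
  have hEta : Et a ≤ 1/1024 := by
    rw [hEtdef]
    simp only
    rw [← hd0, ← hx0]
    have hq : (0:ℝ) ≤ x0^4/(8*a^2) := by positivity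
    have hc2 : (1/32 + 1/(8*a^2) - μ/(4*a)) * x0^2 ≤ (1/16) * x0^2 :=
      mul_le_mul_of_nonneg_right hcoef (sq_nonneg x0)
    nlinarith
  have hEtann : 0 ≤ Et a := by
    have hx01 : |x0| ≤ 1 := le_trans h0 (by norm_num)
    have := stmt15_aux1 μ x0 d0 a le_rfl hx01
    rw [hEtdef]
    simp only
    rw [← hd0, ← hx0]
    nlinarith [sq_nonneg d0, sq_nonneg x0]
  have hexp : Real.exp 1 < 3 := by
    have := Real.exp_one_lt_d9
    linarith
  have hEts : Et s₁ ≤ 3/1024 := by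
    have : Real.exp 1 * Et a ≤ 3 * (1/1024) := by
      apply mul_le_mul (le_of_lt hexp) hEta hEtann (by norm_num)
    linarith
  have hws1 : |w s₁| ≤ 1 := hbd s₁ ⟨hs₁, le_rfl⟩
  set y : ℝ := w s₁ with hy
  set d1 : ℝ := derivWithin w (Ici a) s₁ with hd1
  clear_value y d1
  have haux := stmt15_aux1 μ y d1 s₁ hs₁ hws1
  have hkey : d1^2/2 + y^2/64 ≤ 3/1024 := by
    rw [hEtdef] at hEts
    simp only at hEts
    rw [← hy, ← hd1] at hEts
    linarith
  clear hg hEta hEtann hEts hEtdef haux hbd hode hw hcoef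
  constructor
  · rw [abs_le]
    constructor
    · nlinarith [sq_nonneg (y + 1/2), sq_nonneg d1]
    · nlinarith [sq_nonneg (y - 1/2), sq_nonneg d1]
  · rw [abs_le]
    constructor
    · nlinarith [sq_nonneg (d1 + 1), sq_nonneg y]
    · nlinarith [sq_nonneg (d1 - 1), sq_nonneg y]


lemma stmt15_boot (μ : ℝ) (w : ℝ → ℝ)
    (hw : ContDiffOn ℝ 2 w (Ici (16*(|μ|+1))))
    (h0 : |w (16*(|μ|+1))| ≤ 1)
    (hstep : ∀ s₁ ≥ 16*(|μ|+1), (∀ s' ∈ Icc (16*(|μ|+1)) s₁, |w s'| ≤ 1) → |w s₁| ≤ 1/2) :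
    ∀ s ≥ 16*(|μ|+1), ∀ s' ∈ Icc (16*(|μ|+1)) s, |w s'| ≤ 1 := by
  set a : ℝ := 16*(|μ|+1) with ha
  intro s₁ hs₁
  set A : Set ℝ := {t | t ∈ Icc a s₁ ∧ ∀ s' ∈ Icc a t, |w s'| ≤ 1} with hA
  have hA0 : a ∈ A := by
    refine ⟨⟨le_rfl, hs₁⟩, fun s' hs' => ?_⟩
    have : s' = a := le_antisymm hs'.2 hs'.1
    rwa [this]
  have hbdd : BddAbove A := ⟨s₁, fun t ht => ht.1.2⟩
  have hne : A.Nonempty := ⟨a, hA0⟩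
  set T := sSup A with hT
  have h1 : a ≤ T := le_csSup hbdd hA0
  have h2 : T ≤ s₁ := csSup_le hne (fun t ht => ht.1.2)
  have hlt : ∀ s', a ≤ s' → s' < T → |w s'| ≤ 1 := by
    intro s' h' h''
    obtain ⟨t, htA, hst⟩ := exists_lt_of_lt_csSup hne h''
    exact htA.2 s' ⟨h', hst.le⟩
  have hwT : |w T| ≤ 1 := by
    rcases eq_or_lt_of_le h1 with heq | hlt'
    · rw [← heq]; exact h0
    · have hcw : ContinuousWithinAt w (Ioo a T) T :=
        (hw.continuousOn.continuousWithinAt (mem_Ici.mpr h1)).mono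
          (fun x hx => le_of_lt hx.1)
      have hnb : (nhdsWithin T (Ioo a T)).NeBot := by
        apply mem_closure_iff_nhdsWithin_neBot.mp
        rw [closure_Ioo (ne_of_lt hlt')]
        exact ⟨h1, le_rfl⟩
      exact le_of_tendsto hcw.tendsto.abs
        (eventually_of_mem self_mem_nhdsWithin (fun x hx => hlt x hx.1.le hx.2))
  have hTA : T ∈ A := by
    refine ⟨⟨h1, h2⟩, fun s' hs' => ?_⟩
    rcases lt_or_eq_of_le hs'.2 with h | h
    · exact hlt s' hs'.1 h
    · rw [h]; exact hwT
  rcases eq_or_lt_of_le h2 with heq | hlt2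
  · intro s' hs'
    rw [heq] at hTA
    exact hTA.2 s' hs'
  · exfalso
    have hhalf := hstep T h1 hTA.2
    have hcw : ContinuousWithinAt w (Ici T) T :=
      (hw.continuousOn.continuousWithinAt (mem_Ici.mpr h1)).mono
        (Ici_subset_Ici.mpr h1)
    have hev : ∀ᶠ x in nhdsWithin T (Ici T), |w x| ≤ 1 := by
      have htd := Metric.tendsto_nhds.mp hcw (1/4) (by norm_num)
      filter_upwards [htd] with x hx
      have h3 : |w x - w T| < 1/4 := by rwa [Real.dist_eq] at hx
      have h4 : |w x| ≤ |w x - w T| + |w T| := by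
        have := abs_add_le (w x - w T) (w T)
        simpa using this
      linarith
    obtain ⟨u, hu, hsub⟩ := mem_nhdsGE_iff_exists_Icc_subset.mp hev
    set t' := min u s₁ with ht'
    have ht'T : T < t' := lt_min hu hlt2
    have ht'A : t' ∈ A := by
      refine ⟨⟨le_trans h1 ht'T.le, min_le_right _ _⟩, fun s' hs' => ?_⟩
      rcases le_or_gt s' T with h | h
      · exact hTA.2 s' ⟨hs'.1, h⟩
      · exact hsub ⟨h.le, le_trans hs'.2 (min_le_left _ _)⟩
    exact absurd (le_csSup hbdd ht'A) (not_le.mpr ht'T)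


/-- Self-similar defocusing ODE `w'' + (1/16 + 1/(4s²) - μ/(2s))w - w³/(2s²) = 0` on
`[s₀,∞)`, `s₀ = 16(|μ|+1)`, with `E = ½(w')² + (1/32 + 1/(8s²) - μ/(4s))w² - w⁴/(8s²)`:
as long as `|w| ≤ 1` one has `E ≥ ½(w')² + w²/64` and `E' ≤ (16(|μ|+1)/s²)E`, and if the
data `|w(s₀)| ≤ 1`, `|w'(s₀)|` are sufficiently small then `|w(s)| ≤ 1` for all `s ≥ s₀`
and `w`, `w'` remain bounded. -/
theorem stmt15 (μ : ℝ) :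
    let s₀ : ℝ := 16 * (|μ| + 1)
    let E : (ℝ → ℝ) → ℝ → ℝ := fun w s =>
      (deriv w s) ^ 2 / 2 + (1/32 + 1/(8*s^2) - μ/(4*s)) * (w s) ^ 2 - (w s) ^ 4 / (8*s^2)
    (∀ w : ℝ → ℝ, ContDiffOn ℝ 2 w (Set.Ici s₀) →
      (∀ s > s₀,
        deriv (deriv w) s + (1/16 + 1/(4*s^2) - μ/(2*s)) * w s - (w s) ^ 3 / (2*s^2) = 0) →
      ∀ s > s₀, (∀ s' ∈ Set.Icc s₀ s, |w s'| ≤ 1) →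
        (deriv w s) ^ 2 / 2 + (w s) ^ 2 / 64 ≤ E w s ∧
        deriv (E w) s ≤ (16 * (|μ| + 1) / s ^ 2) * E w s) ∧
    ∃ δ > (0:ℝ), ∀ w : ℝ → ℝ, ContDiffOn ℝ 2 w (Set.Ici s₀) →
      (∀ s > s₀,
        deriv (deriv w) s + (1/16 + 1/(4*s^2) - μ/(2*s)) * w s - (w s) ^ 3 / (2*s^2) = 0) →
      |w s₀| ≤ δ → |derivWithin w (Set.Ici s₀) s₀| ≤ δ →
      (∀ s ≥ s₀, |w s| ≤ 1) ∧
      ∃ C : ℝ, ∀ s ≥ s₀, |w s| ≤ C ∧ |derivWithin w (Set.Ici s₀) s| ≤ C := by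
  intro s₀ E
  have hs₀ : s₀ = 16 * (|μ| + 1) := rfl
  have ha16 : (16:ℝ) ≤ s₀ := by have := abs_nonneg μ; rw [hs₀]; nlinarith
  have ha0 : (0:ℝ) < s₀ := by linarith
  constructor
  · -- Part 1
    intro w hw hode s hs hbd
    have hs16 : 16 * (|μ| + 1) ≤ s := le_of_lt (hs₀ ▸ hs)
    have hs0 : (0:ℝ) < s := lt_trans ha0 hs
    have hws : |w s| ≤ 1 := hbd s ⟨hs.le, le_rfl⟩
    have hEw : E w = fun t => (deriv w t) ^ 2 / 2
        + (1/32 + 1/(8*t^2) - μ/(4*t)) * (w t) ^ 2 - (w t) ^ 4 / (8*t^2) := rfl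
    have hlow : (deriv w s) ^ 2 / 2 + (w s) ^ 2 / 64 ≤ E w s := by
      rw [hEw]
      exact stmt15_aux1 μ (w s) (deriv w s) s hs16 hws
    refine ⟨hlow, ?_⟩
    -- derivative of E w at s
    have hmem : Ici s₀ ∈ nhds s := Ici_mem_nhds hs
    have hcd : ContDiffAt ℝ 2 w s := hw.contDiffAt hmem
    have hw1 : HasDerivAt w (deriv w s) s :=
      (hcd.differentiableAt (by norm_num)).hasDerivAt
    have hw2 : HasDerivAt (deriv w) (deriv (deriv w) s) s := by
      have hopen : ContDiffOn ℝ 2 w (Ioi s₀) := hw.mono Ioi_subset_Ici_self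
      have hD : ContDiffOn ℝ 1 (deriv w) (Ioi s₀) :=
        hopen.deriv_of_isOpen isOpen_Ioi (by norm_num)
      exact (((hD.differentiableOn one_ne_zero).differentiableAt
        (Ioi_mem_nhds hs))).hasDerivAt
    have hasD := stmt15_hasDeriv μ w s hs0 hw1 hw2 (hode s hs)
    have hderiv : deriv (E w) s
        = (μ/(4*s^2) - 1/(4*s^3)) * (w s)^2 + (w s)^4/(4*s^3) := by
      rw [hEw]
      exact hasD.deriv
    rw [hderiv]
    have hwx2 : (w s)^2 ≤ 1 := by nlinarith [abs_nonneg (w s), sq_abs (w s)]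
    have hwx4 : (w s)^4 ≤ (w s)^2 := by nlinarith [sq_nonneg (w s)]
    have hmu : μ ≤ |μ| := le_abs_self μ
    have hlow2 : (w s)^2/64 ≤ E w s := by nlinarith [sq_nonneg (deriv w s)]
    have hD1 : (μ/(4*s^2) - 1/(4*s^3)) * (w s)^2 + (w s)^4/(4*s^3)
        ≤ |μ|/(4*s^2) * (w s)^2 := by
      have h1 : (w s)^4/(4*s^3) ≤ (w s)^2/(4*s^3) :=
        div_le_div_of_nonneg_right hwx4 (by positivity)
      have h2 : μ/(4*s^2) * (w s)^2 ≤ |μ|/(4*s^2) * (w s)^2 :=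
        mul_le_mul_of_nonneg_right
          (div_le_div_of_nonneg_right hmu (by positivity)) (sq_nonneg (w s))
      have e1 : (μ/(4*s^2) - 1/(4*s^3)) * (w s)^2 + (w s)^4/(4*s^3)
          = μ/(4*s^2)*(w s)^2 - (w s)^2/(4*s^3) + (w s)^4/(4*s^3) := by ring
      rw [e1]
      linarith
    have hD2 : |μ|/(4*s^2) * (w s)^2 ≤ 16*(|μ|+1)/s^2 * ((w s)^2/64) := by
      have he : 16*(|μ|+1)/s^2 * ((w s)^2/64) - |μ|/(4*s^2) * (w s)^2
          = (w s)^2/(4*s^2) := by field_simp; ring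
      nlinarith [div_nonneg (sq_nonneg (w s))
        (le_of_lt (show (0:ℝ) < 4*s^2 by positivity))]
    have hD3 : 16*(|μ|+1)/s^2 * ((w s)^2/64) ≤ 16*(|μ|+1)/s^2 * E w s :=
      mul_le_mul_of_nonneg_left hlow2 (by positivity)
    linarith
  · -- Part 2
    refine ⟨1/32, by norm_num, ?_⟩
    intro w hw hode h0 h0'
    have hstep' : ∀ s₁ ≥ 16*(|μ|+1), (∀ s' ∈ Icc (16*(|μ|+1)) s₁, |w s'| ≤ 1)
        → |w s₁| ≤ 1/2 :=
      fun s₁ h hb => (stmt15_step μ w hw hode h0 h0' s₁ h hb).1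
    have hboot := stmt15_boot μ w hw (le_trans h0 (by norm_num)) hstep'
    refine ⟨fun s hs => hboot s hs s ⟨hs, le_rfl⟩, 1, fun s hs => ?_⟩
    have hres := stmt15_step μ w hw hode h0 h0' s hs (hboot s hs)
    exact ⟨le_trans hres.1 (by norm_num), hres.2⟩
end

section
/- For any v₀ ∈ ℝ and μ ∈ ℝ, there exists ε > 0 and a unique solution v of v'' + v'/a + μv + v³ = 0 on (0,ε] such that v and a·v'(a) extend Hölder continuously to [0,ε], v(0) = v₀ and a·v'(a) = O(a²) as a → 0⁺ (in particular v'(0) = 0). -/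
open Set Filter Topology Asymptotics MeasureTheory intervalIntegral Interval

namespace Stmt18aux

lemma hasDerivAt_primitive {g : ℝ → ℝ} (hg : Continuous g) (a : ℝ) :
    HasDerivAt (fun x => ∫ t in (0:ℝ)..x, g t) (g a) a :=
  intervalIntegral.integral_hasDerivAt_right (hg.intervalIntegrable 0 a)
    (hg.stronglyMeasurableAtFilter _ _) hg.continuousAt

lemma continuous_primitive {g : ℝ → ℝ} (hg : Continuous g) :
    Continuous (fun x => ∫ t in (0:ℝ)..x, g t) :=
  continuous_iff_continuousAt.2 fun a => (hasDerivAt_primitive hg a).continuousAt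

lemma abs_le_of_uIoc {s t : ℝ} (ht : t ∈ Ι (0:ℝ) s) : |t| ≤ |s| := by
  rcases Set.mem_uIoc.1 ht with h | h
  · rw [abs_of_pos h.1, abs_of_nonneg (h.1.le.trans h.2)]; exact h.2
  · rw [abs_of_nonpos h.2, abs_of_neg (lt_of_lt_of_le h.1 h.2)]; linarith [h.1]

lemma bound_integral {k : ℝ → ℝ} (hk : Continuous k) {M : ℝ} (hM : ∀ t, |k t| ≤ M) (s : ℝ) :
    |∫ t in (0:ℝ)..s, t * k t| ≤ M * s ^ 2 := by
  have hM0 : 0 ≤ M := le_trans (abs_nonneg _) (hM 0)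
  have h := intervalIntegral.norm_integral_le_of_norm_le_const
    (C := |s| * M) (f := fun t => t * k t) (a := 0) (b := s) ?_
  · calc |∫ t in (0:ℝ)..s, t * k t| ≤ |s| * M * |s - 0| := h
    _ = M * s ^ 2 := by
          rw [sub_zero]
          rw [show |s| * M * |s| = M * (|s| * |s|) by ring, ← abs_mul, abs_of_nonneg (mul_self_nonneg s)]
          ring
  · intro t ht
    have := abs_le_of_uIoc ht
    calc ‖t * k t‖ = |t| * |k t| := abs_mul _ _
    _ ≤ |s| * M := mul_le_mul this (hM t) (abs_nonneg _) (abs_nonneg _)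

lemma bound_G {k : ℝ → ℝ} (hk : Continuous k) {M : ℝ} (hM : ∀ t, |k t| ≤ M) (s : ℝ) :
    |s⁻¹ * ∫ t in (0:ℝ)..s, t * k t| ≤ M * |s| := by
  have hM0 : 0 ≤ M := le_trans (abs_nonneg _) (hM 0)
  rcases eq_or_ne s 0 with rfl | hs
  · simp
  · rw [abs_mul, abs_inv]
    have h2 := bound_integral hk hM s
    calc |s|⁻¹ * |∫ t in (0:ℝ)..s, t * k t| ≤ |s|⁻¹ * (M * s ^ 2) := by
          apply mul_le_mul_of_nonneg_left h2 (by positivity)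
    _ = M * |s| := by
          have : s ^ 2 = |s| * |s| := by rw [← abs_mul, abs_of_nonneg (mul_self_nonneg s)]; ring
          rw [this]
          have hs' : |s| ≠ 0 := abs_ne_zero.2 hs
          field_simp

lemma continuous_G {k : ℝ → ℝ} (hk : Continuous k) {M : ℝ} (hM : ∀ t, |k t| ≤ M) :
    Continuous (fun s => s⁻¹ * ∫ t in (0:ℝ)..s, t * k t) := by
  have hc : Continuous (fun s => ∫ t in (0:ℝ)..s, t * k t) :=
    continuous_primitive (continuous_id.mul hk)
  rw [continuous_iff_continuousAt]
  intro s
  rcases eq_or_ne s 0 with rfl | hs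
  · have h0 : Tendsto (fun s => s⁻¹ * ∫ t in (0:ℝ)..s, t * k t) (𝓝 0) (𝓝 0) := by
      apply squeeze_zero_norm (fun s => bound_G hk hM s)
      have : Tendsto (fun s : ℝ => M * |s|) (𝓝 0) (𝓝 (M * |0|)) :=
        (continuous_const.mul continuous_abs).tendsto 0
      simpa using this
    have : (fun s => s⁻¹ * ∫ t in (0:ℝ)..s, t * k t) 0 = 0 := by simp
    have h1 : (0:ℝ)⁻¹ * ∫ (t : ℝ) in (0:ℝ)..(0:ℝ), t * k t = 0 := by simp
    rw [ContinuousAt, h1]; exact h0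
  · exact ((continuousAt_inv₀ hs).mul hc.continuousAt)

end Stmt18aux

namespace Stmt18aux2

lemma f_lip (μ R x y : ℝ) (hx : |x| ≤ R) (hy : |y| ≤ R) :
    |(μ * x + x ^ 3) - (μ * y + y ^ 3)| ≤ (|μ| + 3 * R ^ 2) * |x - y| := by
  have h : (μ * x + x ^ 3) - (μ * y + y ^ 3) = (x - y) * (μ + (x ^ 2 + x * y + y ^ 2)) := by ring
  rw [h, abs_mul, mul_comm]
  apply mul_le_mul_of_nonneg_right _ (abs_nonneg _)
  calc |μ + (x ^ 2 + x * y + y ^ 2)| ≤ |μ| + |x ^ 2 + x * y + y ^ 2| := abs_add_le _ _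
  _ ≤ |μ| + 3 * R ^ 2 := by
      have h1 : |x ^ 2 + x * y + y ^ 2| ≤ 3 * R ^ 2 := by
        have hxy : |x * y| ≤ R ^ 2 := by
          rw [abs_mul]
          calc |x| * |y| ≤ R * R := mul_le_mul hx hy (abs_nonneg _) ((abs_nonneg x).trans hx)
          _ = R ^ 2 := by ring
        have hx2 : x ^ 2 ≤ R ^ 2 := by nlinarith [abs_nonneg x, sq_abs x]
        have hy2 : y ^ 2 ≤ R ^ 2 := by nlinarith [abs_nonneg y, sq_abs y]
        have := abs_le.1 hxy
        rw [abs_le]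
        constructor <;> nlinarith [sq_nonneg x, sq_nonneg y]
      linarith

noncomputable def clamp (c r x : ℝ) : ℝ := max (c - r) (min (c + r) x)

lemma clamp_mem (c r x : ℝ) (hr : 0 ≤ r) : |clamp c r x - c| ≤ r := by
  unfold clamp
  rw [abs_le]
  constructor
  · have : c - r ≤ max (c - r) (min (c + r) x) := le_max_left _ _
    linarith
  · have h1 : min (c + r) x ≤ c + r := min_le_left _ _
    have : max (c - r) (min (c + r) x) ≤ c + r := max_le (by linarith) h1
    linarith

lemma clamp_eq (c r x : ℝ) (h : |x - c| ≤ r) : clamp c r x = x := by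
  rw [abs_le] at h
  unfold clamp
  rw [min_eq_right (by linarith), max_eq_right (by linarith)]

lemma clamp_lip (c r x y : ℝ) : |clamp c r x - clamp c r y| ≤ |x - y| := by
  unfold clamp
  have h1 : |min (c + r) x - min (c + r) y| ≤ |x - y| := by
    rw [abs_sub_comm]
    rcases le_total x (c+r) with h | h <;> rcases le_total y (c+r) with h' | h' <;>
      simp [min_eq_left, min_eq_right, min_eq_left h, *] <;> rw [abs_le] <;>
      constructor <;> cases abs_le.1 (le_refl |x - y|) <;>
      nlinarith [le_abs_self (x - y), neg_abs_le (x - y), le_abs_self (y - x), neg_abs_le (y - x)]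
  calc |max (c - r) (min (c + r) x) - max (c - r) (min (c + r) y)|
      ≤ |min (c + r) x - min (c + r) y| := by
        rcases le_total (min (c+r) x) (c-r) with h | h <;> rcases le_total (min (c+r) y) (c-r) with h' | h' <;>
          simp [max_eq_left, max_eq_right, *] <;> rw [abs_le] <;> constructor <;>
          nlinarith [le_abs_self (min (c+r) x - min (c+r) y), neg_abs_le (min (c+r) x - min (c+r) y)]
  _ ≤ |x - y| := h1

lemma continuous_clamp (c r : ℝ) : Continuous (clamp c r) :=
  continuous_const.max (continuous_const.min continuous_id)

end Stmt18aux2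

namespace Stmt18aux3
open Stmt18aux Stmt18aux2 BoundedContinuousFunction NNReal

/-- Main construction: a continuous function satisfying the integral equation on `[0, εt]`,
with a pointwise bound on the nonlinearity along it. -/
lemma construct (v₀ μ : ℝ) : ∃ εt > (0:ℝ), ∃ v : ℝ → ℝ, Continuous v ∧
    (∃ Mv : ℝ, ∀ t, |μ * v t + v t ^ 3| ≤ Mv) ∧
    ∀ a ∈ Icc (0:ℝ) εt,
      v a = v₀ - ∫ s in (0:ℝ)..a, s⁻¹ * ∫ t in (0:ℝ)..s, t * (μ * v t + v t ^ 3) := by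
  classical
  set B : ℝ := |v₀| + 1 with hB
  set M : ℝ := |μ| * B + B ^ 3 with hM
  set L : ℝ := |μ| + 3 * B ^ 2 with hL
  have hB1 : 1 ≤ B := by simp only [hB]; linarith [abs_nonneg v₀]
  have hB0 : 0 < B := by linarith
  have hM1 : 1 ≤ M := by nlinarith [abs_nonneg μ]
  have hM0 : 0 ≤ M := by linarith
  have hL1 : 1 ≤ L := by nlinarith [abs_nonneg μ]
  set fc : ℝ → ℝ := fun x => μ * clamp v₀ 1 x + (clamp v₀ 1 x) ^ 3 with hfc
  have hfcC : Continuous fc := by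
    have := continuous_clamp v₀ 1
    fun_prop
  have hclampB : ∀ x, |clamp v₀ 1 x| ≤ B := by
    intro x
    have h := clamp_mem v₀ 1 x zero_le_one
    have := abs_sub_abs_le_abs_sub (clamp v₀ 1 x) v₀
    simp only [hB]; linarith [abs_le.1 h]
  have hfcM : ∀ x, |fc x| ≤ M := by
    intro x
    have h := hclampB x
    calc |fc x| ≤ |μ * clamp v₀ 1 x| + |(clamp v₀ 1 x) ^ 3| := abs_add_le _ _
    _ = |μ| * |clamp v₀ 1 x| + |clamp v₀ 1 x| ^ 3 := by
        rw [abs_mul, abs_pow]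
    _ ≤ |μ| * B + B ^ 3 := by
        have h0 := abs_nonneg (clamp v₀ 1 x)
        have : |clamp v₀ 1 x| ^ 3 ≤ B ^ 3 := pow_le_pow_left₀ h0 h 3
        nlinarith [abs_nonneg μ]
  have hfcL : ∀ x y, |fc x - fc y| ≤ L * |x - y| := by
    intro x y
    calc |fc x - fc y| ≤ L * |clamp v₀ 1 x - clamp v₀ 1 y| :=
      f_lip μ B _ _ (hclampB x) (hclampB y)
    _ ≤ L * |x - y| := mul_le_mul_of_nonneg_left (clamp_lip _ _ _ _) (by positivity)
  -- choose the final time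
  set εt : ℝ := min 1 (min (1 / M) (1 / (2 * L))) with hεt
  have hM0' : 0 < M := by linarith
  have hL0' : 0 < L := by linarith
  have hεt0 : 0 < εt := by
    refine lt_min zero_lt_one (lt_min ?_ ?_) <;> positivity
  have hεt1 : εt ≤ 1 := min_le_left _ _
  have hεtM : M * εt ^ 2 ≤ 1 := by
    have h1 : εt ≤ 1 / M := le_trans (min_le_right _ _) (min_le_left _ _)
    have h2 : εt ^ 2 ≤ εt := by nlinarith
    calc M * εt ^ 2 ≤ M * εt := by nlinarith
    _ ≤ M * (1 / M) := by nlinarith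
    _ ≤ 1 := by
        rcases eq_or_lt_of_le hM0 with h | h
        · rw [← h]; norm_num
        · rw [mul_one_div, div_self h.ne']
  have hεtL : L * εt ^ 2 ≤ 1 / 2 := by
    have h1 : εt ≤ 1 / (2 * L) := le_trans (min_le_right _ _) (min_le_right _ _)
    have h2 : εt ^ 2 ≤ εt := by nlinarith
    have hL0 : 0 < L := by linarith
    calc L * εt ^ 2 ≤ L * (1 / (2 * L)) := by nlinarith
    _ = 1 / 2 := by
        rw [mul_one_div, div_eq_div_iff (by linarith) (by norm_num)]
        ring
  -- projection to [0, εt]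
  set π : ℝ → ℝ := fun a => max 0 (min a εt) with hπ
  have hπC : Continuous π := continuous_const.max (continuous_id.min continuous_const)
  have hπmem : ∀ a, π a ∈ Icc (0:ℝ) εt := fun a =>
    ⟨le_max_left _ _, max_le hεt0.le (min_le_right _ _)⟩
  have hπid : ∀ a ∈ Icc (0:ℝ) εt, π a = a := by
    intro a ha
    simp only [hπ]
    rw [min_eq_left ha.2, max_eq_right ha.1]
  have hπabs : ∀ a, ∀ s ∈ Ι (0:ℝ) (π a), |s| ≤ εt := by
    intro a s hs
    have h1 := abs_le_of_uIoc hs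
    have h2 := hπmem a
    calc |s| ≤ |π a| := h1
    _ = π a := abs_of_nonneg h2.1
    _ ≤ εt := h2.2
  -- the integral operator
  set Tf : (ℝ → ℝ) → ℝ → ℝ :=
    fun g a => v₀ - ∫ s in (0:ℝ)..(π a), s⁻¹ * ∫ t in (0:ℝ)..s, t * fc (g t) with hTf
  have key : ∀ g : ℝ → ℝ, Continuous g →
      Continuous (Tf g) ∧ ∀ a, |Tf g a - v₀| ≤ M * εt ^ 2 := by
    intro g hg
    have hkg : Continuous fun t => fc (g t) := hfcC.comp hg
    have hkgM : ∀ t, |fc (g t)| ≤ M := fun t => hfcM (g t)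
    have hGgC : Continuous (fun s => s⁻¹ * ∫ t in (0:ℝ)..s, t * fc (g t)) :=
      continuous_G hkg hkgM
    have hPC : Continuous (fun x => ∫ s in (0:ℝ)..x, s⁻¹ * ∫ t in (0:ℝ)..s, t * fc (g t)) :=
      continuous_primitive hGgC
    constructor
    · exact continuous_const.sub (hPC.comp hπC)
    · intro a
      have hb : ∀ s ∈ Ι (0:ℝ) (π a), ‖s⁻¹ * ∫ t in (0:ℝ)..s, t * fc (g t)‖ ≤ M * εt := by
        intro s hs
        calc ‖s⁻¹ * ∫ t in (0:ℝ)..s, t * fc (g t)‖ ≤ M * |s| := bound_G hkg hkgM s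
        _ ≤ M * εt := mul_le_mul_of_nonneg_left (hπabs a s hs) hM0
      have h := intervalIntegral.norm_integral_le_of_norm_le_const hb
      have hπa := hπmem a
      calc |Tf g a - v₀| = ‖∫ s in (0:ℝ)..(π a), s⁻¹ * ∫ t in (0:ℝ)..s, t * fc (g t)‖ := by
            simp only [hTf]
            rw [show v₀ - (∫ s in (0:ℝ)..(π a), s⁻¹ * ∫ t in (0:ℝ)..s, t * fc (g t)) - v₀
              = -(∫ s in (0:ℝ)..(π a), s⁻¹ * ∫ t in (0:ℝ)..s, t * fc (g t)) by ring, abs_neg]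
            rfl
      _ ≤ M * εt * |π a - 0| := h
      _ ≤ M * εt ^ 2 := by
            rw [sub_zero, abs_of_nonneg hπa.1]
            calc M * εt * π a ≤ M * εt * εt :=
                  mul_le_mul_of_nonneg_left hπa.2 (mul_nonneg hM0 hεt0.le)
            _ = M * εt ^ 2 := by ring
  -- bundle as a map on bounded continuous functions
  set T : (ℝ →ᵇ ℝ) → (ℝ →ᵇ ℝ) := fun g =>
    BoundedContinuousFunction.ofNormedAddCommGroup (Tf ⇑g) (key _ g.continuous).1
      (|v₀| + M * εt ^ 2) (fun a => by
        have := (key _ g.continuous).2 a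
        calc ‖Tf (⇑g) a‖ ≤ |v₀| + |Tf (⇑g) a - v₀| := by
              rw [Real.norm_eq_abs]
              have := abs_sub_abs_le_abs_sub (Tf (⇑g) a) v₀
              linarith [abs_nonneg v₀]
        _ ≤ |v₀| + M * εt ^ 2 := by linarith) with hT
  have hcontract : ContractingWith (1/2 : ℝ≥0) T := by
    constructor
    · rw [← NNReal.coe_lt_coe]; norm_num
    · apply LipschitzWith.of_dist_le_mul
      intro g h
      have hd0 : (0:ℝ) ≤ dist g h := dist_nonneg
      rw [show (((1:ℝ≥0)/2 : ℝ≥0) : ℝ) = 1/2 by norm_num]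
      apply (BoundedContinuousFunction.dist_le (by positivity)).2
      intro a
      set d : ℝ := dist g h with hdd
      have hkd : ∀ t, |fc (h t) - fc (g t)| ≤ L * d := by
        intro t
        calc |fc (h t) - fc (g t)| ≤ L * |h t - g t| := hfcL _ _
        _ ≤ L * d := by
            have h1 : dist (h t) (g t) ≤ dist h g := BoundedContinuousFunction.dist_coe_le_dist t
            rw [dist_comm h g] at h1
            rw [Real.dist_eq] at h1
            exact mul_le_mul_of_nonneg_left h1 (by linarith)
      have hkc : Continuous fun t => fc (h t) - fc (g t) :=
        (hfcC.comp h.continuous).sub (hfcC.comp g.continuous)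
      have hGd : ∀ s, |s⁻¹ * ∫ t in (0:ℝ)..s, t * (fc (h t) - fc (g t))| ≤ (L * d) * |s| :=
        fun s => bound_G hkc hkd s
      have hint : ∀ (w : ℝ → ℝ), Continuous w → ∀ x : ℝ,
          IntervalIntegrable (fun t => t * w t) volume 0 x :=
        fun w hw x => (continuous_id.mul hw).intervalIntegrable 0 x
      have hsplit : ∀ s : ℝ, s⁻¹ * (∫ t in (0:ℝ)..s, t * fc (h t)) -
          s⁻¹ * (∫ t in (0:ℝ)..s, t * fc (g t))
          = s⁻¹ * ∫ t in (0:ℝ)..s, t * (fc (h t) - fc (g t)) := by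
        intro s
        rw [← mul_sub, ← intervalIntegral.integral_sub
          ((show Continuous fun t : ℝ => t * fc (h t) from
            continuous_id.mul (hfcC.comp' h.continuous)).intervalIntegrable 0 s)
          ((show Continuous fun t : ℝ => t * fc (g t) from
            continuous_id.mul (hfcC.comp' g.continuous)).intervalIntegrable 0 s)]
        congr 1
        apply intervalIntegral.integral_congr
        intro t _
        ring
      have hGgC : Continuous (fun s => s⁻¹ * ∫ t in (0:ℝ)..s, t * fc (g t)) :=
        continuous_G (hfcC.comp g.continuous) (fun t => hfcM _)
      have hGhC : Continuous (fun s => s⁻¹ * ∫ t in (0:ℝ)..s, t * fc (h t)) :=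
        continuous_G (hfcC.comp h.continuous) (fun t => hfcM _)
      have heq : Tf (⇑g) a - Tf (⇑h) a
          = ∫ s in (0:ℝ)..(π a), s⁻¹ * ∫ t in (0:ℝ)..s, t * (fc (h t) - fc (g t)) := by
        simp only [hTf]
        rw [show ∀ P Q : ℝ, (v₀ - P) - (v₀ - Q) = Q - P from fun P Q => by ring]
        rw [← intervalIntegral.integral_sub (hGhC.intervalIntegrable 0 (π a))
          (hGgC.intervalIntegrable 0 (π a))]
        apply intervalIntegral.integral_congr
        intro s _
        exact hsplit s
      rw [Real.dist_eq]
      have hTcoe : ∀ (g' : ℝ →ᵇ ℝ) (x : ℝ), (T g') x = Tf (⇑g') x := fun g' x => rfl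
      rw [hTcoe, hTcoe, heq]
      have hb : ∀ s ∈ Ι (0:ℝ) (π a),
          ‖s⁻¹ * ∫ t in (0:ℝ)..s, t * (fc (h t) - fc (g t))‖ ≤ (L * d) * εt := by
        intro s hs
        calc ‖s⁻¹ * ∫ t in (0:ℝ)..s, t * (fc (h t) - fc (g t))‖ ≤ (L * d) * |s| := hGd s
        _ ≤ (L * d) * εt := by
            apply mul_le_mul_of_nonneg_left (hπabs a s hs)
            positivity
      have h2 := intervalIntegral.norm_integral_le_of_norm_le_const hb
      have hπa := hπmem a
      calc ‖∫ s in (0:ℝ)..(π a), s⁻¹ * ∫ t in (0:ℝ)..s, t * (fc (h t) - fc (g t))‖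
          ≤ (L * d) * εt * |π a - 0| := h2
      _ ≤ (L * d) * εt * εt := by
            apply mul_le_mul_of_nonneg_left _ (by positivity)
            rw [sub_zero, abs_of_nonneg hπa.1]
            exact hπa.2
      _ = (L * εt ^ 2) * d := by ring
      _ ≤ (1/2) * d := by nlinarith
  -- the fixed point
  set vb : ℝ →ᵇ ℝ := ContractingWith.fixedPoint T hcontract with hvb
  have hfix : T vb = vb := hcontract.fixedPoint_isFixedPt
  set v : ℝ → ℝ := ⇑vb with hv
  have hvC : Continuous v := vb.continuous
  have heqv : ∀ a, v a = v₀ - ∫ s in (0:ℝ)..(π a), s⁻¹ * ∫ t in (0:ℝ)..s, t * fc (v t) := by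
    intro a
    conv_lhs => rw [hv, ← hfix]
    rfl
  have hnear : ∀ a, |v a - v₀| ≤ 1 := by
    intro a
    have h1 : |Tf v a - v₀| ≤ M * εt ^ 2 := (key v hvC).2 a
    have h2 : Tf v a = v a := (heqv a).symm
    rw [← h2]
    linarith
  have hdecl : ∀ t, fc (v t) = μ * v t + v t ^ 3 := by
    intro t
    have h := clamp_eq v₀ 1 (v t) (hnear t)
    simp only [hfc, h]
  refine ⟨εt, hεt0, v, hvC, ⟨M, fun t => by rw [← hdecl t]; exact hfcM _⟩, ?_⟩
  intro a ha
  rw [heqv a, hπid a ha]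
  simp only [hdecl]

end Stmt18aux3

namespace Stmt18aux4

lemma eqOn_Icc_of_hasDerivAt {F G φ : ℝ → ℝ} {b : ℝ} (hb : 0 < b)
    (hF : ContinuousOn F (Icc 0 b)) (hG : ContinuousOn G (Icc 0 b))
    (hdF : ∀ x ∈ Ioo (0:ℝ) b, HasDerivAt F (φ x) x)
    (hdG : ∀ x ∈ Ioo (0:ℝ) b, HasDerivAt G (φ x) x)
    (h0 : F 0 = G 0) : ∀ x ∈ Icc (0:ℝ) b, F x = G x := by
  have hIoo : ∀ a ∈ Ioo (0:ℝ) b, F a = G a := by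
    intro a ha
    have hstep : ∀ δ ∈ Ioo (0:ℝ) a, F a - G a = F δ - G δ := by
      intro δ hδ
      have hsub : Icc δ a ⊆ Icc 0 b := Icc_subset_Icc hδ.1.le ha.2.le
      have hsub2 : Ico δ a ⊆ Ioo 0 b := fun x hx =>
        ⟨lt_of_lt_of_le hδ.1 hx.1, lt_trans hx.2 ha.2⟩
      have h1 := eq_of_has_deriv_right_eq
        (f := F) (g := fun x => G x + (F δ - G δ)) (f' := φ) (a := δ) (b := a)
        (fun x hx => (hdF x (hsub2 hx)).hasDerivWithinAt)
        (fun x hx => ((hdG x (hsub2 hx)).add_const _).hasDerivWithinAt)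
        (hF.mono hsub) ((hG.mono hsub).add continuousOn_const) (by ring)
      have h2 := h1 a ⟨hδ.2.le, le_refl a⟩
      linarith
    have hne : (𝓝[Ioo (0:ℝ) a] (0:ℝ)).NeBot := by
      rw [← mem_closure_iff_nhdsWithin_neBot, closure_Ioo ha.1.ne]
      exact ⟨le_refl 0, ha.1.le⟩
    have hsub3 : Ioo (0:ℝ) a ⊆ Icc 0 b := fun x hx =>
      ⟨hx.1.le, le_trans hx.2.le ha.2.le⟩
    have ht1 : Tendsto (fun δ => F δ - G δ) (𝓝[Ioo (0:ℝ) a] 0) (𝓝 (F 0 - G 0)) := by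
      have hFt := (hF 0 ⟨le_refl 0, hb.le⟩).mono hsub3
      have hGt := (hG 0 ⟨le_refl 0, hb.le⟩).mono hsub3
      exact hFt.sub hGt
    have ht2 : Tendsto (fun _ : ℝ => F a - G a) (𝓝[Ioo (0:ℝ) a] 0) (𝓝 (F a - G a)) :=
      tendsto_const_nhds
    have heq : (fun δ => F δ - G δ) =ᶠ[𝓝[Ioo (0:ℝ) a] 0] fun _ => F a - G a :=
      eventually_of_mem self_mem_nhdsWithin fun δ hδ => (hstep δ hδ).symm
    have huniq := tendsto_nhds_unique (Filter.Tendsto.congr' heq.symm ht2) ht1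
    linarith
  intro x hx
  rcases eq_or_lt_of_le hx.1 with h | h
  · rw [← h]; exact h0
  rcases eq_or_lt_of_le hx.2 with h2 | h2
  · subst h2
    have hne : (𝓝[Ioo (0:ℝ) x] x).NeBot := by
      rw [← mem_closure_iff_nhdsWithin_neBot, closure_Ioo h.ne]
      exact ⟨h.le, le_refl x⟩
    have hsub3 : Ioo (0:ℝ) x ⊆ Icc 0 x := Ioo_subset_Icc_self
    have ht1 : Tendsto F (𝓝[Ioo (0:ℝ) x] x) (𝓝 (F x)) := (hF x hx).mono hsub3
    have ht2 : Tendsto G (𝓝[Ioo (0:ℝ) x] x) (𝓝 (G x)) := (hG x hx).mono hsub3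
    have heq : F =ᶠ[𝓝[Ioo (0:ℝ) x] x] G :=
      eventually_of_mem self_mem_nhdsWithin fun δ hδ => hIoo δ hδ
    exact tendsto_nhds_unique (Filter.Tendsto.congr' heq ht1) ht2
  · exact hIoo x ⟨h, h2⟩

end Stmt18aux4

namespace Stmt18aux5

lemma hasDerivAt_deriv_of_contDiffOn {u : ℝ → ℝ} {ε : ℝ} (hu : ContDiffOn ℝ 2 u (Ioc 0 ε))
    {a : ℝ} (ha : a ∈ Ioo (0:ℝ) ε) :
    HasDerivAt u (deriv u a) a ∧ HasDerivAt (deriv u) (deriv (deriv u) a) a := by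
  have hmem : Ioc (0:ℝ) ε ∈ 𝓝 a := mem_nhds_iff.2 ⟨Ioo 0 ε, Ioo_subset_Ioc_self, isOpen_Ioo, ha⟩
  have hat : ContDiffAt ℝ 2 u a := hu.contDiffAt hmem
  obtain ⟨U, hU, hUc⟩ := hat.contDiffOn (le_refl 2) (by norm_num)
  have haV : a ∈ interior U := mem_interior_iff_mem_nhds.2 hU
  have hVc : ContDiffOn ℝ 2 u (interior U) := hUc.mono interior_subset
  rw [show (2 : WithTop ℕ∞) = 1 + 1 by norm_num,
    contDiffOn_succ_iff_deriv_of_isOpen isOpen_interior] at hVc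
  obtain ⟨hdiff, -, hcd1⟩ := hVc
  constructor
  · exact (hdiff.differentiableAt (isOpen_interior.mem_nhds haV)).hasDerivAt
  · exact ((hcd1.differentiableOn one_ne_zero).differentiableAt
      (isOpen_interior.mem_nhds haV)).hasDerivAt

end Stmt18aux5
open Stmt18aux Stmt18aux2 Stmt18aux3 Stmt18aux4 Stmt18aux5

/-- Local existence and uniqueness at the regular singular point `a = 0` for the focusing
radial standing-wave ODE: for any `v₀, μ ∈ ℝ` there are `ε > 0` and a unique solution `v`
of `v'' + v'/a + μv + v³ = 0` on `(0,ε]` such that `v` and `a·v'(a)` extend Hölder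
continuously to `[0,ε]`, `v(0) = v₀`, and `a·v'(a) = O(a²)` as `a → 0⁺`. -/
theorem stmt18 (v₀ μ : ℝ) :
    ∃ ε > (0:ℝ), ∃ v : ℝ → ℝ,
      (ContDiffOn ℝ 2 v (Set.Ioc 0 ε) ∧
        (∀ a ∈ Set.Ioc (0:ℝ) ε,
          deriv (deriv v) a + deriv v a / a + μ * v a + (v a) ^ 3 = 0) ∧
        v 0 = v₀ ∧
        (∃ C γ : NNReal, 0 < γ ∧ HolderOnWith C γ v (Set.Icc 0 ε) ∧
          HolderOnWith C γ (fun a => a * deriv v a) (Set.Icc 0 ε)) ∧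
        (fun a => a * deriv v a) =O[nhdsWithin 0 (Set.Ioi (0:ℝ))] fun a => a ^ 2) ∧
      ∀ u : ℝ → ℝ,
        (ContDiffOn ℝ 2 u (Set.Ioc 0 ε) ∧
          (∀ a ∈ Set.Ioc (0:ℝ) ε,
            deriv (deriv u) a + deriv u a / a + μ * u a + (u a) ^ 3 = 0) ∧
          u 0 = v₀ ∧
          (∃ C γ : NNReal, 0 < γ ∧ HolderOnWith C γ u (Set.Icc 0 ε) ∧
            HolderOnWith C γ (fun a => a * deriv u a) (Set.Icc 0 ε)) ∧
          (fun a => a * deriv u a) =O[nhdsWithin 0 (Set.Ioi (0:ℝ))] fun a => a ^ 2) →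
        Set.EqOn v u (Set.Ioc 0 ε) := by
  obtain ⟨εt, hεt0, v, hvC, ⟨Mv, hMv⟩, hveq0⟩ := construct v₀ μ
  set ε := εt / 2 with hε
  have hε0 : 0 < ε := by positivity
  have hεlt : ε < εt := by rw [hε]; linarith
  have hMv0 : 0 ≤ Mv := le_trans (abs_nonneg _) (hMv 0)
  have hFvC : Continuous (fun t => μ * v t + v t ^ 3) := by fun_prop
  set Fv : ℝ → ℝ := fun t => μ * v t + v t ^ 3 with hFv
  set Hv : ℝ → ℝ := fun s => ∫ t in (0:ℝ)..s, t * Fv t with hHv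
  have hHvC : Continuous Hv := continuous_primitive (continuous_id.mul hFvC)
  have hHvD : ∀ s, HasDerivAt Hv (s * Fv s) s :=
    fun s => hasDerivAt_primitive (continuous_id.mul hFvC) s
  set Gv : ℝ → ℝ := fun s => s⁻¹ * Hv s with hGv
  have hGvC : Continuous Gv := continuous_G hFvC hMv
  have hGvB : ∀ s, |Gv s| ≤ Mv * |s| := fun s => bound_G hFvC hMv s
  have hHvB : ∀ s, |Hv s| ≤ Mv * s ^ 2 := fun s => bound_integral hFvC hMv s
  have hveq : ∀ a ∈ Icc (0:ℝ) εt, v a = v₀ - ∫ s in (0:ℝ)..a, Gv s := hveq0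
  have hdv : ∀ a ∈ Ioo (0:ℝ) εt, HasDerivAt v (-Gv a) a := by
    intro a ha
    have hev : v =ᶠ[𝓝 a] fun x => v₀ - ∫ s in (0:ℝ)..x, Gv s :=
      eventually_of_mem (isOpen_Ioo.mem_nhds ha) fun x hx => hveq x ⟨hx.1.le, hx.2.le⟩
    have hD : HasDerivAt (fun x => v₀ - ∫ s in (0:ℝ)..x, Gv s) (-Gv a) a := by
      exact (hasDerivAt_primitive hGvC a).const_sub v₀
    exact hD.congr_of_eventuallyEq hev
  have hderiv : ∀ a ∈ Ioo (0:ℝ) εt, deriv v a = -Gv a := fun a ha => (hdv a ha).deriv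
  have hdd : ∀ a ∈ Ioo (0:ℝ) εt, HasDerivAt (deriv v) ((a ^ 2)⁻¹ * Hv a - Fv a) a := by
    intro a ha
    have hev : deriv v =ᶠ[𝓝 a] fun x => -Gv x :=
      eventually_of_mem (isOpen_Ioo.mem_nhds ha) fun x hx => hderiv x hx
    have hD : HasDerivAt (fun x => -Gv x) ((a ^ 2)⁻¹ * Hv a - Fv a) a := by
      have h1 : HasDerivAt (fun x : ℝ => x⁻¹) (-(a ^ 2)⁻¹) a := hasDerivAt_inv ha.1.ne'
      have h2 := (h1.mul (hHvD a)).neg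
      convert h2 using 1
      any_goals rfl
      have ha0 : a ≠ 0 := ha.1.ne'
      field_simp
      ring
    exact hD.congr_of_eventuallyEq hev
  have hddval : ∀ a ∈ Ioo (0:ℝ) εt, deriv (deriv v) a = (a ^ 2)⁻¹ * Hv a - Fv a :=
    fun a ha => (hdd a ha).deriv
  have hsubIoc : Ioc (0:ℝ) ε ⊆ Ioo 0 εt := fun x hx => ⟨hx.1, lt_of_le_of_lt hx.2 hεlt⟩
  have hφv : ∀ x ∈ Icc (0:ℝ) ε, x * deriv v x = -Hv x := by
    intro x hx
    rcases eq_or_lt_of_le hx.1 with h | h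
    · rw [← h]
      simp [hHv]
    · rw [hderiv x (hsubIoc ⟨h, hx.2⟩)]
      have hx0 : x ≠ 0 := h.ne'
      simp only [hGv]
      field_simp
  refine ⟨ε, hε0, v, ⟨?_, ?_, ?_, ?_, ?_⟩, ?_⟩
  · -- ContDiffOn
    apply ContDiffOn.mono _ hsubIoc
    rw [show (2 : WithTop ℕ∞) = 1 + 1 by norm_num,
      contDiffOn_succ_iff_deriv_of_isOpen isOpen_Ioo]
    refine ⟨fun x hx => (hdv x hx).differentiableAt.differentiableWithinAt, by simp, ?_⟩
    rw [show (1 : WithTop ℕ∞) = 0 + 1 by norm_num,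
      contDiffOn_succ_iff_deriv_of_isOpen isOpen_Ioo]
    refine ⟨fun x hx => (hdd x hx).differentiableAt.differentiableWithinAt, by simp, ?_⟩
    rw [contDiffOn_zero]
    have hcont : ContinuousOn (fun x => (x ^ 2)⁻¹ * Hv x - Fv x) (Ioo (0:ℝ) εt) := by
      apply ContinuousOn.sub
      · apply ContinuousOn.mul _ hHvC.continuousOn
        apply ContinuousOn.inv₀ (continuousOn_pow 2)
        intro x hx
        exact pow_ne_zero 2 hx.1.ne'
      · exact hFvC.continuousOn
    exact hcont.congr hddval
  · -- ODE
    intro a ha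
    have ha' := hsubIoc ha
    rw [hddval a ha', hderiv a ha']
    have ha0 : a ≠ 0 := ha.1.ne'
    simp only [hGv, hFv]
    field_simp
    ring
  · -- initial value
    have := hveq 0 ⟨le_refl 0, hεt0.le⟩
    simpa using this
  · -- Hölder
    have habs : ∀ x ∈ Icc (0:ℝ) ε, ∀ y ∈ Icc (0:ℝ) ε, ∀ s ∈ Ι y x, 0 < s ∧ s ≤ εt := by
      intro x hx y hy s hs
      obtain ⟨hs1, hs2⟩ := hs
      constructor
      · exact lt_of_le_of_lt (le_min hy.1 hx.1) hs1
      · exact le_trans hs2 (max_le (hy.2.trans hεlt.le) (hx.2.trans hεlt.le))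
    refine ⟨Real.toNNReal (Mv * εt), 1, one_pos, ?_, ?_⟩
    · rw [holderOnWith_one, lipschitzOnWith_iff_dist_le_mul]
      intro x hx y hy
      rw [Real.dist_eq, Real.dist_eq, Real.coe_toNNReal _ (by positivity)]
      have hxI : x ∈ Icc (0:ℝ) εt := ⟨hx.1, hx.2.trans hεlt.le⟩
      have hyI : y ∈ Icc (0:ℝ) εt := ⟨hy.1, hy.2.trans hεlt.le⟩
      have h1 : v x - v y = -(∫ s in y..x, Gv s) := by
        rw [hveq x hxI, hveq y hyI]
        rw [show ∀ P Q : ℝ, (v₀ - P) - (v₀ - Q) = -(P - Q) from fun P Q => by ring]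
        congr 1
        exact intervalIntegral.integral_interval_sub_left
          (hGvC.intervalIntegrable 0 x) (hGvC.intervalIntegrable 0 y)
      rw [h1, abs_neg]
      have hb : ∀ s ∈ Ι y x, ‖Gv s‖ ≤ Mv * εt := by
        intro s hs
        obtain ⟨hs1, hs2⟩ := habs x hx y hy s hs
        calc ‖Gv s‖ ≤ Mv * |s| := hGvB s
        _ ≤ Mv * εt := by
            rw [abs_of_pos hs1]
            exact mul_le_mul_of_nonneg_left hs2 hMv0
      exact intervalIntegral.norm_integral_le_of_norm_le_const hb
    · rw [holderOnWith_one, lipschitzOnWith_iff_dist_le_mul]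
      intro x hx y hy
      rw [Real.dist_eq, Real.dist_eq, Real.coe_toNNReal _ (by positivity)]
      rw [hφv x hx, hφv y hy]
      have h1 : -Hv x - -Hv y = -(∫ t in y..x, t * Fv t) := by
        rw [show ∀ P Q : ℝ, -P - -Q = -(P - Q) from fun P Q => by ring]
        congr 1
        simp only [hHv]
        exact intervalIntegral.integral_interval_sub_left
          ((continuous_id.mul hFvC).intervalIntegrable 0 x)
          ((continuous_id.mul hFvC).intervalIntegrable 0 y)
      rw [h1, abs_neg]
      have hb : ∀ t ∈ Ι y x, ‖t * Fv t‖ ≤ Mv * εt := by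
        intro t ht
        obtain ⟨ht1, ht2⟩ := habs x hx y hy t ht
        calc ‖t * Fv t‖ = |t| * |Fv t| := abs_mul _ _
        _ ≤ εt * Mv := by
            apply mul_le_mul _ (hMv t) (abs_nonneg _) hεt0.le
            rw [abs_of_pos ht1]; exact ht2
        _ = Mv * εt := by ring
      exact intervalIntegral.norm_integral_le_of_norm_le_const hb
  · -- big O
    rw [Asymptotics.isBigO_iff]
    refine ⟨Mv, ?_⟩
    filter_upwards [Ioo_mem_nhdsGT hε0] with a ha
    rw [hφv a ⟨ha.1.le, ha.2.le⟩]
    rw [Real.norm_eq_abs, Real.norm_eq_abs, abs_neg]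
    calc |Hv a| ≤ Mv * a ^ 2 := hHvB a
    _ = Mv * |a ^ 2| := by rw [abs_of_nonneg (sq_nonneg a)]
  · -- uniqueness
    rintro u ⟨hu2, huode, hu0, ⟨Cu, γu, hγu0, huH, hφH⟩, -⟩
    have hucont : ContinuousOn u (Icc 0 ε) := huH.continuousOn hγu0
    have hφucont : ContinuousOn (fun x => x * deriv u x) (Icc 0 ε) := hφH.continuousOn hγu0
    -- truncation of u
    set pj : ℝ → ℝ := fun x => max 0 (min x ε) with hpj
    have hpjmem : ∀ x, pj x ∈ Icc (0:ℝ) ε := fun x =>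
      ⟨le_max_left _ _, max_le hε0.le (min_le_right _ _)⟩
    have hpjid : ∀ x ∈ Icc (0:ℝ) ε, pj x = x := by
      intro x hx
      simp only [hpj]
      rw [min_eq_left hx.2, max_eq_right hx.1]
    set ut : ℝ → ℝ := fun x => u (pj x) with hut
    have hutC : Continuous ut := by
      apply hucont.comp_continuous
        (continuous_const.max (continuous_id.min continuous_const)) hpjmem
    have hutid : ∀ x ∈ Icc (0:ℝ) ε, ut x = u x := fun x hx => by
      simp only [hut]; rw [hpjid x hx]
    obtain ⟨Ru, hRu⟩ := isCompact_Icc.exists_bound_of_continuousOn hucont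
    have hRu0 : 0 ≤ Ru := le_trans (norm_nonneg _) (hRu 0 ⟨le_refl 0, hε0.le⟩)
    have hutB : ∀ x, |ut x| ≤ Ru := fun x => hRu _ (hpjmem x)
    set Fu : ℝ → ℝ := fun t => μ * ut t + ut t ^ 3 with hFu
    have hFuC : Continuous Fu := by
      apply Continuous.add (continuous_const.mul hutC)
      exact hutC.pow 3
    set Mu : ℝ := |μ| * Ru + Ru ^ 3 with hMu
    have hFuB : ∀ t, |Fu t| ≤ Mu := by
      intro t
      calc |Fu t| ≤ |μ * ut t| + |ut t ^ 3| := abs_add_le _ _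
      _ = |μ| * |ut t| + |ut t| ^ 3 := by rw [abs_mul, abs_pow]
      _ ≤ |μ| * Ru + Ru ^ 3 := by
          have h0 := abs_nonneg (ut t)
          have h3 : |ut t| ^ 3 ≤ Ru ^ 3 := pow_le_pow_left₀ h0 (hutB t) 3
          nlinarith [abs_nonneg μ, hutB t]
    set Hu : ℝ → ℝ := fun s => ∫ t in (0:ℝ)..s, t * Fu t with hHu
    have hHuC : Continuous Hu := continuous_primitive (continuous_id.mul hFuC)
    set Gu : ℝ → ℝ := fun s => s⁻¹ * Hu s with hGu
    have hGuC : Continuous Gu := continuous_G hFuC hFuB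
    -- second derivative information on the open interval
    have hstep : ∀ x ∈ Ioo (0:ℝ) ε, HasDerivAt (fun b => b * deriv u b)
        (-(x * (μ * u x + u x ^ 3))) x := by
      intro x hx
      obtain ⟨hd1, hd2⟩ := hasDerivAt_deriv_of_contDiffOn hu2 hx
      have hODE := huode x (Ioo_subset_Ioc_self hx)
      have hx0 : x ≠ 0 := hx.1.ne'
      have hmul := (hasDerivAt_id x).mul hd2
      have hval : 1 * deriv u x + id x * deriv (deriv u) x
          = -(x * (μ * u x + u x ^ 3)) := by
        simp only [id_eq, one_mul]
        have h2 : deriv u x / x * x = deriv u x := div_mul_cancel₀ _ hx0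
        linear_combination x * hODE - h2
      rw [hval] at hmul
      exact hmul
    -- integral equation for x * deriv u x
    have hB1 : ∀ x ∈ Icc (0:ℝ) ε, x * deriv u x = -Hu x := by
      apply eqOn_Icc_of_hasDerivAt (φ := fun x => -(x * (μ * u x + u x ^ 3))) hε0
        hφucont (hHuC.neg.continuousOn)
      · exact hstep
      · intro x hx
        have hD : HasDerivAt (fun b => -Hu b) (-(x * Fu x)) x :=
          (hasDerivAt_primitive (continuous_id.mul hFuC) x).neg
        have : Fu x = μ * u x + u x ^ 3 := by
          simp only [hFu]
          rw [hutid x (Ioo_subset_Icc_self hx)]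
        rwa [this] at hD
      · simp [hHu]
    -- derivative of u
    have hder_u : ∀ x ∈ Ioo (0:ℝ) ε, HasDerivAt u (-Gu x) x := by
      intro x hx
      have hd1 := (hasDerivAt_deriv_of_contDiffOn hu2 hx).1
      have hx0 : x ≠ 0 := hx.1.ne'
      have h1 : deriv u x = -Gu x := by
        have h2 := hB1 x (Ioo_subset_Icc_self hx)
        simp only [hGu]
        field_simp
        nlinarith [h2]
      rwa [h1] at hd1
    -- integral equation for u
    have hB2 : ∀ x ∈ Icc (0:ℝ) ε, u x = v₀ - ∫ s in (0:ℝ)..x, Gu s := by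
      apply eqOn_Icc_of_hasDerivAt (φ := fun x => -Gu x) hε0 hucont
        ((continuous_const.sub (continuous_primitive hGuC)).continuousOn)
      · exact hder_u
      · intro x hx
        simpa using (hasDerivAt_const x v₀).sub (hasDerivAt_primitive hGuC x)
      · simpa using hu0
    -- Gronwall
    obtain ⟨Rv, hRv⟩ := isCompact_Icc.exists_bound_of_continuousOn
      (hvC.continuousOn : ContinuousOn v (Icc 0 ε))
    set R : ℝ := max Ru Rv with hR
    have hR0 : 0 ≤ R := le_trans hRu0 (le_max_left _ _)
    set Lg : ℝ := |μ| + 3 * R ^ 2 with hLg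
    have hLg0 : 0 ≤ Lg := by positivity
    set g : ℝ → ℝ := fun t => |ut t - v t| with hg
    have hgC : Continuous g := (hutC.sub hvC).abs
    have hgnn : ∀ t, 0 ≤ g t := fun t => abs_nonneg _
    set W : ℝ → ℝ := fun x => ∫ t in (0:ℝ)..x, g t with hW
    have hWD : ∀ x, HasDerivAt W (g x) x := fun x => hasDerivAt_primitive hgC x
    have hWC : Continuous W := continuous_primitive hgC
    have hWnn : ∀ x, 0 ≤ x → 0 ≤ W x := by
      intro x hx
      apply intervalIntegral.integral_nonneg hx
      intro t _
      exact hgnn t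
    have key : ∀ x ∈ Icc (0:ℝ) ε, g x ≤ Lg * ε * W x := by
      intro x hx
      have hWx : 0 ≤ W x := hWnn x hx.1
      have hI : ∀ t ∈ Icc (0:ℝ) ε, |Fv t - Fu t| ≤ Lg * g t := by
        intro t ht
        have hvb : |v t| ≤ R := le_trans (hRv t ht) (le_max_right _ _)
        have hub : |ut t| ≤ R := le_trans (hutB t) (le_max_left _ _)
        have := f_lip μ R (v t) (ut t) hvb hub
        simp only [hFv, hFu, hg]
        calc |μ * v t + v t ^ 3 - (μ * ut t + ut t ^ 3)| ≤ (|μ| + 3 * R ^ 2) * |v t - ut t| :=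
          this
        _ = Lg * |ut t - v t| := by rw [abs_sub_comm]
      -- pointwise bound on Gv - Gu on (0, x]
      have hGd : ∀ s ∈ Ι (0:ℝ) x, ‖Gv s - Gu s‖ ≤ Lg * W x := by
        intro s hs
        obtain ⟨hs1, hs2⟩ := hs
        have hs0 : 0 < s := lt_of_le_of_lt (le_min (le_refl 0) hx.1) hs1
        have hsx : s ≤ x := le_trans hs2 (max_le hx.1 (le_refl x))
        have hsε : s ≤ ε := hsx.trans hx.2
        have hd : Gv s - Gu s = s⁻¹ * ∫ t in (0:ℝ)..s, t * (Fv t - Fu t) := by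
          simp only [hGv, hGu, hHv, hHu]
          rw [← mul_sub]
          congr 1
          rw [← intervalIntegral.integral_sub
            ((show Continuous fun t : ℝ => t * Fv t from
              continuous_id.mul hFvC).intervalIntegrable 0 s)
            ((show Continuous fun t : ℝ => t * Fu t from
              continuous_id.mul hFuC).intervalIntegrable 0 s)]
          apply intervalIntegral.integral_congr
          intro t _
          ring
        rw [hd]
        have hbound : |∫ t in (0:ℝ)..s, t * (Fv t - Fu t)| ≤ s * Lg * W x := by
          have h1 : |∫ t in (0:ℝ)..s, t * (Fv t - Fu t)|
              ≤ ∫ t in (0:ℝ)..s, |t * (Fv t - Fu t)| := by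
            apply intervalIntegral.abs_integral_le_integral_abs hs0.le
          have h2 : ∫ t in (0:ℝ)..s, |t * (Fv t - Fu t)|
              ≤ ∫ t in (0:ℝ)..s, s * Lg * g t := by
            apply intervalIntegral.integral_mono_on hs0.le
            · exact ((continuous_id.mul (hFvC.sub hFuC)).abs).intervalIntegrable 0 s
            · exact ((continuous_const.mul hgC)).intervalIntegrable 0 s
            · intro t ht
              have ht' : t ∈ Icc (0:ℝ) ε := ⟨ht.1, le_trans ht.2 hsε⟩
              calc |t * (Fv t - Fu t)| = |t| * |Fv t - Fu t| := abs_mul _ _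
              _ ≤ s * (Lg * g t) := by
                  apply mul_le_mul _ (hI t ht') (abs_nonneg _) hs0.le
                  rw [abs_of_nonneg ht.1]; exact ht.2
              _ = s * Lg * g t := by ring
          have h3 : ∫ t in (0:ℝ)..s, s * Lg * g t = s * Lg * ∫ t in (0:ℝ)..s, g t :=
            intervalIntegral.integral_const_mul _ _
          have h4 : (∫ t in (0:ℝ)..s, g t) ≤ W x := by
            have h5 : W x - ∫ t in (0:ℝ)..s, g t = ∫ t in s..x, g t := by
              simp only [hW]
              exact intervalIntegral.integral_interval_sub_left
                (hgC.intervalIntegrable 0 x) (hgC.intervalIntegrable 0 s)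
            have h6 : 0 ≤ ∫ t in s..x, g t :=
              intervalIntegral.integral_nonneg hsx (fun t _ => hgnn t)
            linarith
          calc |∫ t in (0:ℝ)..s, t * (Fv t - Fu t)| ≤ s * Lg * ∫ t in (0:ℝ)..s, g t := by
                rw [← h3]; exact le_trans h1 h2
          _ ≤ s * Lg * W x := by
              apply mul_le_mul_of_nonneg_left h4 (by positivity)
        rw [Real.norm_eq_abs, abs_mul, abs_inv, abs_of_pos hs0]
        calc s⁻¹ * |∫ t in (0:ℝ)..s, t * (Fv t - Fu t)| ≤ s⁻¹ * (s * Lg * W x) := by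
              apply mul_le_mul_of_nonneg_left hbound (by positivity)
        _ = Lg * W x := by field_simp
      -- main estimate
      have hd2 : u x - v x = ∫ s in (0:ℝ)..x, (Gv s - Gu s) := by
        have hxI : x ∈ Icc (0:ℝ) εt := ⟨hx.1, hx.2.trans hεlt.le⟩
        rw [hB2 x hx, hveq x hxI]
        rw [show ∀ P Q : ℝ, (v₀ - P) - (v₀ - Q) = Q - P from fun P Q => by ring]
        rw [← intervalIntegral.integral_sub (hGvC.intervalIntegrable 0 x)
          (hGuC.intervalIntegrable 0 x)]
      have h7 := intervalIntegral.norm_integral_le_of_norm_le_const hGd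
      calc g x = |u x - v x| := by
            simp only [hg]
            rw [hutid x hx, abs_sub_comm]
      _ = ‖∫ s in (0:ℝ)..x, (Gv s - Gu s)‖ := by rw [hd2]; rfl
      _ ≤ Lg * W x * |x - 0| := h7
      _ ≤ Lg * ε * W x := by
          rw [sub_zero, abs_of_nonneg hx.1]
          calc Lg * W x * x ≤ Lg * W x * ε := by
                apply mul_le_mul_of_nonneg_left hx.2 (by positivity)
          _ = Lg * ε * W x := by ring
    -- apply Gronwall
    have hgron := norm_le_gronwallBound_of_norm_deriv_right_le (f := W) (f' := g)
      (δ := 0) (K := Lg * ε) (ε := 0) (a := 0) (b := ε)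
      hWC.continuousOn (fun x _ => (hWD x).hasDerivWithinAt)
      (by simp [hW]) ?_
    · have hWzero : ∀ x ∈ Icc (0:ℝ) ε, W x = 0 := by
        intro x hx
        have h1 := hgron x hx
        rw [sub_zero, gronwallBound_ε0_δ0] at h1
        have h2 := hWnn x hx.1
        rw [Real.norm_eq_abs, abs_of_nonneg h2] at h1
        linarith
      intro x hx
      have hxI : x ∈ Icc (0:ℝ) ε := ⟨hx.1.le, hx.2⟩
      have h1 := key x hxI
      rw [hWzero x hxI] at h1
      have h2 := hgnn x
      have h3 : g x = 0 := by linarith [h1]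
      have h4 : ut x = v x := by
        simp only [hg] at h3
        have h5 := abs_eq_zero.1 h3
        linarith
      rw [hutid x hxI] at h4
      exact h4.symm
    · intro x hx
      have h1 := key x ⟨hx.1, hx.2.le⟩
      rw [Real.norm_eq_abs, Real.norm_eq_abs, abs_of_nonneg (hgnn x),
        abs_of_nonneg (hWnn x hx.1), add_zero]
      exact h1
end
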